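/- arXiv:0906.0855 — 9 statements merged into one kernel-verified Lean document; each statement's English description precedes it below -/
import Mathlib

section
/- Let S be a semigroup with right local units. Then the category S-Set of closed right S-sets is equivalent to the presheaf category PSh(C(S)). An equivalence is given by the functor Q with Q(X)(e) = Xe = {x ∈ X : xe = x} and, for a morphism (e,s,f) of C(S), Q(X)(e,s,f) : Xe → Xf, x ↦ xs. -/
universe u

open CategoryTheory

theorem idem_left_absorb {S : Type u} [Semigroup S] {e f s : S}
    (he : e * e = e) (h : e * s * f = s) : e * s = s := by
  conv_lhs => rw [← h]
  rw [← mul_assoc, ← mul_assoc, he]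
  exact h

theorem idem_right_absorb {S : Type u} [Semigroup S] {e f s : S}
    (hf : f * f = f) (h : e * s * f = s) : s * f = s := by
  conv_lhs => rw [← h]
  rw [mul_assoc, hf]
  exact h

/-- The Cauchy completion `C(S)` of a semigroup `S`: objects are the idempotents,
and a morphism `f ⟶ e` is an element `s` with `e * s * f = s`; composition is
multiplication. -/
def CauchyCat (S : Type u) [Semigroup S] : Type u := {e : S // e * e = e}

namespace CauchyCat

variable {S : Type u} [Semigroup S]

instance : Category.{u} (CauchyCat S) where
  Hom f e := {s : S // e.1 * s * f.1 = s}
  id e := ⟨e.1, by rw [e.2, e.2]⟩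
  comp := fun {f g e} u v => ⟨v.1 * u.1, by
    rw [← mul_assoc, idem_left_absorb e.2 v.2, mul_assoc, idem_right_absorb f.2 u.2]⟩
  id_comp := fun {f e} u => Subtype.ext (idem_right_absorb f.2 u.2)
  comp_id := fun {f e} u => Subtype.ext (idem_left_absorb e.2 u.2)
  assoc := fun u v w => Subtype.ext (mul_assoc w.1 v.1 u.1).symm

end CauchyCat

/-- A right `S`-set: a set with an associative right action of the semigroup `S`. -/
structure RSet (S : Type u) [Semigroup S] : Type (u + 1) where
  carrier : Type u
  act : carrier → S → carrier
  act_mul : ∀ (x : carrier) (s t : S), act (act x s) t = act x (s * t)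

namespace RSet

variable {S : Type u} [Semigroup S]

/-- `S`-equivariant maps between right `S`-sets. -/
@[ext]
structure Hom (X Y : RSet S) where
  toFun : X.carrier → Y.carrier
  map_act : ∀ (x : X.carrier) (s : S), toFun (X.act x s) = Y.act (toFun x) s

/-- A right `S`-set is unitary if every element is of the form `y • s`. -/
def Unitary (X : RSet S) : Prop := ∀ x : X.carrier, ∃ (y : X.carrier) (s : S), X.act y s = x

instance homCategory {P : RSet S → Prop} : Category.{u} {X : RSet S // P X} where
  Hom X Y := RSet.Hom X.1 Y.1
  id X := ⟨fun x => x, fun _ _ => rfl⟩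
  comp f g := ⟨fun x => g.toFun (f.toFun x), fun x s => by
    simp [f.map_act, g.map_act]⟩

end RSet

/-- The category of unitary right `S`-sets, with `S`-equivariant maps. -/
abbrev USet (S : Type u) [Semigroup S] := {X : RSet S // X.Unitary}

namespace RSet

variable {S : Type u} [Semigroup S]

/-- The base relation defining the tensor product `X ⊗_S S`:
`(x • s, t) ∼ (x, s * t)`. -/
def TensorRel (X : RSet S) : (X.carrier × S) → (X.carrier × S) → Prop :=
  fun a b => ∃ (x : X.carrier) (s t : S), a = (X.act x s, t) ∧ b = (x, s * t)

/-- The tensor product `X ⊗_S S`. -/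
def Tensor (X : RSet S) : Type u := Quot (TensorRel X)

/-- The canonical map `X ⊗_S S → X`, `x ⊗ s ↦ x • s`. -/
def tensorMap (X : RSet S) : X.Tensor → X.carrier :=
  Quot.lift (fun p => X.act p.1 p.2) (by
    rintro a b ⟨x, s, t, rfl, rfl⟩
    exact X.act_mul x s t)

/-- A right `S`-set is closed if the canonical map `X ⊗_S S → X` is bijective. -/
def Closed (X : RSet S) : Prop := Function.Bijective X.tensorMap

end RSet

/-- The category of closed right `S`-sets, with `S`-equivariant maps. -/
abbrev CSet (S : Type u) [Semigroup S] := {X : RSet S // X.Closed}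

variable (S : Type u) [Semigroup S]

/-- The presheaf on `C(S)` associated with a right `S`-set `X`:
`e ↦ Xe = {x : x • e = x}`, with transition maps given by the action. -/
@[simps]
def RSet.presheaf (X : RSet S) : (CauchyCat S)ᵒᵖ ⥤ Type u where
  obj e := {x : X.carrier // X.act x e.unop.1 = x}
  map {e f} s := TypeCat.ofHom fun (x : {x : X.carrier // X.act x e.unop.1 = x}) =>
    (⟨X.act x.1 s.unop.1, by rw [X.act_mul, idem_right_absorb f.unop.2 s.unop.2]⟩ :
      {x : X.carrier // X.act x f.unop.1 = x})
  map_id e := by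
    ext x
    exact x.2
  map_comp {a b c} g h := by
    ext x
    exact (X.act_mul x.1 g.unop.1 h.unop.1).symm

/-- The functor `Q` from closed right `S`-sets to presheaves on the Cauchy
completion `C(S)`, `Q(X)(e) = Xe` and `Q(X)(e,s,f)(x) = x • s`. -/
@[simps]
def QFunctor : CSet S ⥤ ((CauchyCat S)ᵒᵖ ⥤ Type u) where
  obj X := X.1.presheaf
  map {X Y} f :=
    { app := fun e => TypeCat.ofHom fun (x : (X.1.presheaf).obj e) =>
        (⟨f.toFun x.1, by rw [← f.map_act, x.2]⟩ : (Y.1.presheaf).obj e)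
      naturality := fun e f' s => by
        ext x
        exact Subtype.ext (‹RSet.Hom X.1 Y.1›.map_act x.1 s.unop.1) }
  map_id X := by
    apply NatTrans.ext
    funext e
    ext x
    rfl
  map_comp f g := by
    apply NatTrans.ext
    funext e
    ext x
    rfl

namespace QProof

open RSet

variable {S : Type u} [Semigroup S]

section eps

variable (hS : ∀ s : S, ∃ e : S, e * e = e ∧ s * e = s)

/-- A choice of right local unit for each element. -/
noncomputable def eps (s : S) : S := (hS s).choose

lemma eps_idem (s : S) : eps hS s * eps hS s = eps hS s := (hS s).choose_spec.1

lemma mul_eps (s : S) : s * eps hS s = s := (hS s).choose_spec.2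

end eps

/-- `e * (t * f) * f = t * f` when `f` is idempotent and `e * t = t`. -/
lemma unit_absorb {e t f : S} (hf : f * f = f) (ht : e * t = t) :
    e * (t * f) * f = t * f := by
  rw [← mul_assoc, ht, mul_assoc, hf]

/-- In a unitary (in particular closed) `S`-set, every element is fixed by some idempotent. -/
lemma exists_fix (hS : ∀ s : S, ∃ e : S, e * e = e ∧ s * e = s) (X : RSet S) (hX : Function.Surjective X.tensorMap) (x : X.carrier) :
    ∃ e : S, e * e = e ∧ X.act x e = x := by
  obtain ⟨z, hz⟩ := hX x
  obtain ⟨⟨y, s⟩, rfl⟩ := Quot.exists_rep z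
  refine ⟨eps hS s, eps_idem hS s, ?_⟩
  have hz' : X.act y s = x := hz
  rw [← hz', X.act_mul, mul_eps]

/-- Naturality of a transformation between the associated presheaves, in value form. -/
lemma nat_val {X Y : RSet S} (η : X.presheaf ⟶ Y.presheaf)
    (e f : CauchyCat S) (u : f ⟶ e) (x z : X.carrier) (hx : X.act x e.1 = x)
    (hz : z = X.act x u.1) (h' : X.act z f.1 = z) :
    (η.app (Opposite.op f) ⟨z, h'⟩).1
      = Y.act (η.app (Opposite.op e) ⟨x, hx⟩).1 u.1 := by
  subst hz
  have h2 := congrArg Subtype.val (types_congr_hom (η.naturality u.op) ⟨x, hx⟩)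
  exact h2

/-- If `e * g = e` and `x` is fixed by `e` and `g`, the transformation takes the same
value on `x` at `e` and at `g`. -/
lemma key_A {X Y : RSet S} (η : X.presheaf ⟶ Y.presheaf)
    (e g : CauchyCat S) (heg : e.1 * g.1 = e.1)
    (x z : X.carrier) (hx : X.act x e.1 = x) (hz : z = x) (hzg : X.act z g.1 = z) :
    (η.app (Opposite.op g) ⟨z, hzg⟩).1 = (η.app (Opposite.op e) ⟨x, hx⟩).1 := by
  have hu : e.1 * e.1 * g.1 = e.1 := by rw [e.2, heg]
  have h1 := nat_val η e g ⟨e.1, hu⟩ x z hx (by rw [hz, hx]) hzg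
  rw [h1, (η.app (Opposite.op e) ⟨x, hx⟩).2]

/-- Key consistency lemma: if `X` is closed and `x` is fixed by two idempotents `e, e'`,
then a natural transformation takes the same value on `x` at `e` and at `e'`. -/
lemma key_C (hS : ∀ s : S, ∃ e : S, e * e = e ∧ s * e = s)
    {X Y : RSet S} (hXc : X.Closed) (η : X.presheaf ⟶ Y.presheaf)
    (e e' : CauchyCat S) (x : X.carrier) (hx : X.act x e.1 = x) (hx' : X.act x e'.1 = x) :
    (η.app (Opposite.op e) ⟨x, hx⟩).1 = (η.app (Opposite.op e') ⟨x, hx'⟩).1 := by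
  classical
  let Ψ : X.carrier × S → Y.carrier := fun p =>
    (η.app (Opposite.op ⟨eps hS p.2, eps_idem hS p.2⟩)
      ⟨X.act p.1 p.2, by rw [X.act_mul, mul_eps]⟩).1
  have hΨ : ∀ a b, X.TensorRel a b → Ψ a = Ψ b := by
    rintro _ _ ⟨x', s, t, rfl, rfl⟩
    obtain ⟨q, hq, hxq⟩ := exists_fix hS X hXc.2 x'
    have hst : (s * t) * eps hS t = s * t := by
      rw [mul_assoc, mul_eps]
    have hu1 : q * (q * (s * t)) * eps hS t = q * (s * t) := by
      rw [← mul_assoc, hq, mul_assoc q (s*t), hst]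
    have hu2 : q * (q * (s * t)) * eps hS (s * t) = q * (s * t) := by
      rw [← mul_assoc, hq, mul_assoc q (s*t), mul_eps]
    have h1 := nat_val η ⟨q, hq⟩ ⟨eps hS t, eps_idem hS t⟩ ⟨q * (s * t), hu1⟩
      x' (X.act (X.act x' s) t) hxq
      (by rw [X.act_mul, ← X.act_mul x' q, hxq])
      (by show X.act (X.act (X.act x' s) t) (eps hS t) = X.act (X.act x' s) t
          rw [X.act_mul (X.act x' s) t (eps hS t), mul_eps])
    have h2 := nat_val η ⟨q, hq⟩ ⟨eps hS (s * t), eps_idem hS (s * t)⟩ ⟨q * (s * t), hu2⟩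
      x' (X.act x' (s * t)) hxq
      (by rw [← X.act_mul x' q, hxq])
      (by show X.act (X.act x' (s * t)) (eps hS (s * t)) = X.act x' (s * t)
          rw [X.act_mul, mul_eps])
    exact h1.trans h2.symm
  let Ψb : X.Tensor → Y.carrier := Quot.lift Ψ hΨ
  have hval : ∀ (f : CauchyCat S) (hxf : X.act x f.1 = x),
      Ψb (Quot.mk _ (x, f.1)) = (η.app (Opposite.op f) ⟨x, hxf⟩).1 := by
    intro f hxf
    show (η.app (Opposite.op ⟨eps hS f.1, eps_idem hS f.1⟩)
      ⟨X.act x f.1, _⟩).1 = _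
    exact key_A η f ⟨eps hS f.1, eps_idem hS f.1⟩ (mul_eps hS f.1) x (X.act x f.1) hxf hxf
      (by rw [X.act_mul, mul_eps])
  have heq : (Quot.mk _ (x, e.1) : X.Tensor) = Quot.mk _ (x, e'.1) := by
    apply hXc.1
    show X.act x e.1 = X.act x e'.1
    rw [hx, hx']
  rw [← hval e hx, ← hval e' hx', heq]

section EssSurj

variable (F : (CauchyCat S)ᵒᵖ ⥤ Type u)

/-- Representatives for the tensor product `F ⊗ P` of a presheaf `F` with the
canonical functor `P : C(S) → S-Set`, `e ↦ eS`. -/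
structure Pre : Type u where
  e : CauchyCat S
  x : F.obj (Opposite.op e)
  t : S
  ht : e.1 * t = t

/-- The tensor relation on representatives. -/
def Rel : Pre F → Pre F → Prop := fun a b =>
  ∃ u : a.e ⟶ b.e, a.x = F.map u.op b.x ∧ b.t = u.1 * a.t

lemma Pre.ext_t (e : CauchyCat S) (x : F.obj (Opposite.op e)) {t t' : S}
    (h : t = t') {ht : e.1 * t = t} {ht' : e.1 * t' = t'} :
    (⟨e, x, t, ht⟩ : Pre F) = ⟨e, x, t', ht'⟩ := by subst h; rfl

/-- The action on representatives. -/
def preAct (a : Pre F) (s : S) : Pre F :=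
  ⟨a.e, a.x, a.t * s, by rw [← mul_assoc, a.ht]⟩

/-- The `S`-set `L F = F ⊗ P`. -/
def LRSet : RSet S where
  carrier := Quot (Rel F)
  act z s := Quot.lift (fun a => Quot.mk _ (preAct F a s))
    (fun a b ⟨u, hx, ht⟩ => Quot.sound ⟨u, hx, by
      show b.t * s = u.1 * (a.t * s); rw [ht, mul_assoc]⟩) z
  act_mul z s t := Quot.inductionOn z fun a =>
    congrArg (Quot.mk _) (Pre.ext_t F a.e a.x (mul_assoc a.t s t))

lemma lact_mk (a : Pre F) (s : S) :
    (LRSet F).act (Quot.mk _ a) s = Quot.mk _ (preAct F a s) := rfl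

/-- The retraction `L F → L F ⊗ S` of the canonical map. -/
def lphi : (LRSet F).carrier → (LRSet F).Tensor :=
  Quot.lift (fun a => Quot.mk _ (Quot.mk _ ⟨a.e, a.x, a.e.1, a.e.2⟩, a.t))
    (by
      rintro a b ⟨u, hx, ht⟩
      have step1 : (Quot.mk (Rel F) ⟨a.e, a.x, a.e.1, a.e.2⟩)
          = Quot.mk (Rel F) ⟨b.e, b.x, u.1, idem_left_absorb b.e.2 u.2⟩ :=
        Quot.sound ⟨u, hx, (idem_right_absorb a.e.2 u.2).symm⟩
      have step2 : (Quot.mk (Rel F) ⟨b.e, b.x, u.1, idem_left_absorb b.e.2 u.2⟩)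
          = (LRSet F).act (Quot.mk _ ⟨b.e, b.x, b.e.1, b.e.2⟩) u.1 := by
        rw [lact_mk]
        exact congrArg (Quot.mk _)
          (Pre.ext_t F b.e b.x (idem_left_absorb b.e.2 u.2).symm)
      show (Quot.mk ((LRSet F).TensorRel) (Quot.mk _ ⟨a.e, a.x, a.e.1, a.e.2⟩, a.t))
        = Quot.mk _ (Quot.mk _ ⟨b.e, b.x, b.e.1, b.e.2⟩, b.t)
      rw [step1, step2, ht]
      exact Quot.sound ⟨Quot.mk _ ⟨b.e, b.x, b.e.1, b.e.2⟩, u.1, a.t, rfl, rfl⟩)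

lemma lphi_mk (a : Pre F) :
    lphi F (Quot.mk _ a) = Quot.mk _ (Quot.mk _ ⟨a.e, a.x, a.e.1, a.e.2⟩, a.t) := rfl

lemma tensorMap_lphi (z : (LRSet F).carrier) : (LRSet F).tensorMap (lphi F z) = z := by
  refine Quot.inductionOn z fun a => ?_
  rw [lphi_mk]
  show (LRSet F).act (Quot.mk _ ⟨a.e, a.x, a.e.1, a.e.2⟩) a.t = Quot.mk _ a
  rw [lact_mk]
  exact congrArg (Quot.mk _) (Pre.ext_t F a.e a.x a.ht)

lemma lphi_tensorMap (z : (LRSet F).Tensor) : lphi F ((LRSet F).tensorMap z) = z := by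
  refine Quot.inductionOn z fun p => ?_
  obtain ⟨w, s⟩ := p
  refine Quot.inductionOn w fun a => ?_
  show lphi F ((LRSet F).act (Quot.mk _ a) s) = _
  rw [lact_mk, lphi_mk]
  refine Eq.symm (Quot.sound ⟨Quot.mk _ ⟨a.e, a.x, a.e.1, a.e.2⟩, a.t, s, ?_, rfl⟩)
  rw [lact_mk]
  exact congrArg (fun w => (w, s)) (congrArg (Quot.mk _) (Pre.ext_t F a.e a.x a.ht.symm))

lemma lclosed : (LRSet F).Closed := by
  constructor
  · intro z₁ z₂ h
    rw [← lphi_tensorMap F z₁, ← lphi_tensorMap F z₂, h]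
  · intro y
    exact ⟨lphi F y, tensorMap_lphi F y⟩

/-- The extraction map used to prove injectivity of the unit. -/
def omega (e : (CauchyCat S)ᵒᵖ) : (LRSet F).carrier → F.obj e :=
  Quot.lift (fun a => F.map (Quiver.Hom.op (⟨a.t * e.unop.1,
      unit_absorb e.unop.2 a.ht⟩ : e.unop ⟶ a.e)) a.x)
    (by
      rintro a b ⟨u, hx, ht⟩
      show F.map (Quiver.Hom.op (⟨a.t * e.unop.1, unit_absorb e.unop.2 a.ht⟩ :
          e.unop ⟶ a.e)) a.x
        = F.map (Quiver.Hom.op (⟨b.t * e.unop.1, unit_absorb e.unop.2 b.ht⟩ :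
          e.unop ⟶ b.e)) b.x
      have hm : (⟨a.t * e.unop.1, unit_absorb e.unop.2 a.ht⟩ : e.unop ⟶ a.e) ≫ u
          = (⟨b.t * e.unop.1, unit_absorb e.unop.2 b.ht⟩ : e.unop ⟶ b.e) := by
        apply Subtype.ext
        show u.1 * (a.t * e.unop.1) = b.t * e.unop.1
        rw [← mul_assoc, ht]
      rw [hx, ← FunctorToTypes.map_comp_apply, ← op_comp, hm])

lemma omega_mk (e : (CauchyCat S)ᵒᵖ) (a : Pre F) (h : a.e.1 * (a.t * e.unop.1) * e.unop.1 = a.t * e.unop.1) :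
    omega F e (Quot.mk _ a)
      = F.map (Quiver.Hom.op (⟨a.t * e.unop.1, h⟩ : e.unop ⟶ a.e)) a.x := rfl

end EssSurj

end QProof

/-- If `S` is a semigroup with right local units, then `Q` is an equivalence
between the category of closed right `S`-sets and presheaves on `C(S)`. -/
theorem qFunctor_isEquivalence
    (hS : ∀ s : S, ∃ e : S, e * e = e ∧ s * e = s) :
    (QFunctor S).IsEquivalence := by
  classical
  have faithful : (QFunctor S).Faithful := by
    constructor
    intro X Y f g h
    apply RSet.Hom.ext
    funext x
    obtain ⟨q, hq, hxq⟩ := QProof.exists_fix hS X.1 X.2.2 x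
    have h2 := congrArg
      (fun η => ((η.app (Opposite.op (⟨q, hq⟩ : CauchyCat S))) ⟨x, hxq⟩).1) h
    exact h2
  have full : (QFunctor S).Full := by
    constructor
    intro X Y η
    have hfix : ∀ x : X.1.carrier, ∃ e, e * e = e ∧ X.1.act x e = x :=
      fun x => QProof.exists_fix hS X.1 X.2.2 x
    let q : X.1.carrier → CauchyCat S := fun x => ⟨(hfix x).choose, (hfix x).choose_spec.1⟩
    have hq : ∀ x, X.1.act x (q x).1 = x := fun x => (hfix x).choose_spec.2
    let f0 : X.1.carrier → Y.1.carrier := fun x => (η.app (Opposite.op (q x)) ⟨x, hq x⟩).1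
    have hf0 : ∀ (e : CauchyCat S) (x : X.1.carrier) (hx : X.1.act x e.1 = x),
        f0 x = (η.app (Opposite.op e) ⟨x, hx⟩).1 := fun e x hx =>
      QProof.key_C hS X.2 η (q x) e x (hq x) hx
    have hact : ∀ (x : X.1.carrier) (s : S), f0 (X.1.act x s) = Y.1.act (f0 x) s := by
      intro x s
      have he : X.1.act (X.1.act x s) (QProof.eps hS s) = X.1.act x s := by
        rw [X.1.act_mul, QProof.mul_eps]
      rw [hf0 ⟨QProof.eps hS s, QProof.eps_idem hS s⟩ (X.1.act x s) he]
      have hu : (q x).1 * ((q x).1 * s) * QProof.eps hS s = (q x).1 * s := by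
        rw [← mul_assoc, (q x).2, mul_assoc, QProof.mul_eps]
      have h1 := QProof.nat_val η (q x) ⟨QProof.eps hS s, QProof.eps_idem hS s⟩
        ⟨(q x).1 * s, hu⟩ x (X.1.act x s) (hq x)
        (by rw [← X.1.act_mul, hq]) he
      refine h1.trans ?_
      rw [← Y.1.act_mul]
      exact congrArg (fun y => Y.1.act y s) (η.app (Opposite.op (q x)) ⟨x, hq x⟩).2
    refine ⟨⟨f0, hact⟩, ?_⟩
    apply NatTrans.ext
    funext e
    obtain ⟨e⟩ := e
    ext xx
    obtain ⟨xv, hxv⟩ := xx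
    exact Subtype.ext (hf0 e xv hxv)
  have essSurj : (QFunctor S).EssSurj := by
    constructor
    intro F
    refine ⟨⟨QProof.LRSet F, QProof.lclosed F⟩, ⟨?_⟩⟩
    refine (NatIso.ofComponents (fun e => Equiv.toIso ⟨?_, ?_, ?_, ?_⟩) ?_).symm
    · -- toFun : F.obj e → (Q (LF)).obj e
      exact fun x => ⟨Quot.mk _ ⟨e.unop, x, e.unop.1, e.unop.2⟩, by
        rw [QProof.lact_mk]
        exact congrArg (Quot.mk _) (QProof.Pre.ext_t F e.unop x e.unop.2
          (ht := by rw [← mul_assoc, e.unop.2]; exact e.unop.2) (ht' := e.unop.2))⟩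
    · -- invFun
      exact fun z => QProof.omega F e z.1
    · -- left_inv
      intro x
      have hm : (⟨e.unop.1 * e.unop.1, by rw [e.unop.2, e.unop.2]; exact e.unop.2⟩ :
          e.unop ⟶ e.unop) = 𝟙 e.unop := Subtype.ext e.unop.2
      show QProof.omega F e (Quot.mk _ ⟨e.unop, x, e.unop.1, e.unop.2⟩) = x
      rw [QProof.omega_mk F e ⟨e.unop, x, e.unop.1, e.unop.2⟩
        (QProof.unit_absorb e.unop.2 e.unop.2)]
      show F.map (Quiver.Hom.op (⟨e.unop.1 * e.unop.1, _⟩ : e.unop ⟶ e.unop)) x = x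
      rw [hm]
      show F.map (𝟙 (Opposite.op e.unop)) x = x
      rw [FunctorToTypes.map_id_apply]
    · -- right_inv
      rintro ⟨zc, hz⟩
      apply Subtype.ext
      obtain ⟨a, rfl⟩ := Quot.exists_rep zc
      have pf : a.e.1 * (a.t * e.unop.1) * e.unop.1 = a.t * e.unop.1 :=
        QProof.unit_absorb e.unop.2 a.ht
      show Quot.mk _ ⟨e.unop, QProof.omega F e (Quot.mk _ a), e.unop.1, e.unop.2⟩
        = Quot.mk (QProof.Rel F) a
      rw [QProof.omega_mk F e a pf]
      have step1 : (Quot.mk (QProof.Rel F)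
          ⟨e.unop, F.map (Quiver.Hom.op (⟨a.t * e.unop.1, pf⟩ : e.unop ⟶ a.e)) a.x,
            e.unop.1, e.unop.2⟩)
          = Quot.mk (QProof.Rel F) ⟨a.e, a.x, (a.t * e.unop.1) * e.unop.1, by
              rw [← mul_assoc, ← mul_assoc, a.ht]⟩ :=
        Quot.sound ⟨⟨a.t * e.unop.1, pf⟩, rfl, rfl⟩
      rw [step1]
      have h2 : (Quot.mk (QProof.Rel F) ⟨a.e, a.x, (a.t * e.unop.1) * e.unop.1, by
            rw [← mul_assoc, ← mul_assoc, a.ht]⟩)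
          = Quot.mk (QProof.Rel F) (QProof.preAct F a e.unop.1) :=
        congrArg (Quot.mk _) (QProof.Pre.ext_t F a.e a.x (by rw [mul_assoc, e.unop.2])
          (ht := by rw [← mul_assoc, ← mul_assoc, a.ht])
          (ht' := by rw [← mul_assoc, a.ht]))
      rw [← QProof.lact_mk F a e.unop.1] at h2
      exact h2.trans hz
    · -- naturality
      intro e e' h
      ext x
      apply Subtype.ext
      show Quot.mk (QProof.Rel F) ⟨e'.unop, F.map h x, e'.unop.1, e'.unop.2⟩
        = (QProof.LRSet F).act (Quot.mk _ ⟨e.unop, x, e.unop.1, e.unop.2⟩) h.unop.1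
      have step1 : (Quot.mk (QProof.Rel F) ⟨e'.unop, F.map h x, e'.unop.1, e'.unop.2⟩)
          = Quot.mk (QProof.Rel F) ⟨e.unop, x, h.unop.1 * e'.unop.1, by
              rw [← mul_assoc, idem_left_absorb e.unop.2 h.unop.2]⟩ :=
        Quot.sound ⟨h.unop, rfl, rfl⟩
      rw [step1, QProof.lact_mk]
      exact congrArg (Quot.mk _) (QProof.Pre.ext_t F e.unop x
        ((idem_right_absorb e'.unop.2 h.unop.2).trans
          (idem_left_absorb e.unop.2 h.unop.2).symm))
  exact { faithful := faithful, full := full, essSurj := essSurj }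
end

section
/- Let C and D be small categories and let U : PSh(C) → PSh(D) be a colimit-preserving functor admitting a colimit-preserving right adjoint. Then for every object c of C, the presheaf U(y(c)) is a retract of a representable presheaf, where y denotes the Yoneda embedding. Moreover, if idempotents split in D, then every U(y(c)) is isomorphic to a representable presheaf. -/
universe u

open CategoryTheory

theorem retract_aux
    {C : Type u} [SmallCategory C] {D : Type u} [SmallCategory D]
    (U : (Cᵒᵖ ⥤ Type u) ⥤ (Dᵒᵖ ⥤ Type u))
    (G : (Dᵒᵖ ⥤ Type u) ⥤ (Cᵒᵖ ⥤ Type u))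
    (adj : U ⊣ G)
    [Limits.PreservesColimits U] [Limits.PreservesColimits G] :
    ∀ c : C, ∃ (d : D) (i : U.obj (yoneda.obj c) ⟶ yoneda.obj d)
      (r : yoneda.obj d ⟶ U.obj (yoneda.obj c)), i ≫ r = 𝟙 (U.obj (yoneda.obj c)) := by
  intro c
  set P := U.obj (yoneda.obj c) with hP
  have hc : Limits.IsColimit (Presheaf.tautologicalCocone P) := Presheaf.isColimitTautologicalCocone P
  have hc2 : Limits.IsColimit (G.mapCocone (Presheaf.tautologicalCocone P)) :=
    Limits.isColimitOfPreserves G hc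
  have hc3 : Limits.IsColimit (((evaluation Cᵒᵖ (Type u)).obj (Opposite.op c)).mapCocone
      (G.mapCocone (Presheaf.tautologicalCocone P))) :=
    Limits.isColimitOfPreserves _ hc2
  obtain ⟨j, y, hy⟩ := Limits.Types.jointly_surjective _ hc3
    (yonedaEquiv (adj.unit.app (yoneda.obj c)))
  change (G.obj (yoneda.obj j.left)).obj (Opposite.op c) at y
  refine ⟨j.left, (adj.homEquiv _ _).symm (yonedaEquiv.symm y),
    j.hom, ?_⟩
  apply (adj.homEquiv _ _).injective
  rw [Adjunction.homEquiv_naturality_right, Equiv.apply_symm_apply,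
    Adjunction.homEquiv_apply]
  apply yonedaEquiv.injective
  rw [yonedaEquiv_comp, Equiv.apply_symm_apply, yonedaEquiv_comp]
  simp only [G.map_id, NatTrans.id_app, types_id_apply]
  exact hy.trans (congrArg (fun (f : G.obj P ⟶ G.obj P) => ConcreteCategory.hom (NatTrans.app f (Opposite.op c))
    (yonedaEquiv (adj.unit.app (yoneda.obj c)))) (G.map_id P)).symm

/-- If a colimit-preserving functor between presheaf categories (i.e. a profunctor)
has a colimit-preserving right adjoint, then the image of every representable is a
retract of a representable; and when idempotents split in `D`, it is in fact
isomorphic to a representable. -/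
theorem image_of_representable_retract_of_representable
    {C : Type u} [SmallCategory C] {D : Type u} [SmallCategory D]
    (U : (Cᵒᵖ ⥤ Type u) ⥤ (Dᵒᵖ ⥤ Type u))
    (G : (Dᵒᵖ ⥤ Type u) ⥤ (Cᵒᵖ ⥤ Type u))
    (adj : U ⊣ G)
    [Limits.PreservesColimits U] [Limits.PreservesColimits G] :
    (∀ c : C, ∃ (d : D) (i : U.obj (yoneda.obj c) ⟶ yoneda.obj d)
      (r : yoneda.obj d ⟶ U.obj (yoneda.obj c)), i ≫ r = 𝟙 (U.obj (yoneda.obj c))) ∧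
    (IsIdempotentComplete D →
      ∀ c : C, ∃ d : D, Nonempty (U.obj (yoneda.obj c) ≅ yoneda.obj d)) := by
  refine ⟨retract_aux U G adj, fun hIC c => ?_⟩
  obtain ⟨d, i, r, hir⟩ := retract_aux U G adj c
  set e : d ⟶ d := yoneda.preimage (r ≫ i) with he
  have hmape : yoneda.map e = r ≫ i := yoneda.map_preimage _
  have hee : e ≫ e = e := by
    apply yoneda.map_injective
    rw [yoneda.map_comp, hmape]
    rw [Category.assoc, ← Category.assoc i r i, hir, Category.id_comp]
  obtain ⟨d', s, p, hsp, hps⟩ := hIC.idempotents_split d e hee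
  refine ⟨d', ⟨⟨i ≫ yoneda.map p, yoneda.map s ≫ r, ?_, ?_⟩⟩⟩
  · rw [Category.assoc, ← Category.assoc (yoneda.map p) (yoneda.map s) r,
      ← yoneda.map_comp, hps, hmape]
    simp [hir]
  · rw [Category.assoc, ← Category.assoc r i (yoneda.map p), ← hmape,
      ← yoneda.map_comp, ← yoneda.map_comp, ← hps]
    simp [hsp]
end

section
/- Let C and D be small categories in which idempotents split. If the presheaf categories PSh(C) and PSh(D) are equivalent, then there is a Morita context for C and D: a category U together with weak equivalences C → U and D → U, where the set of objects of U is the disjoint union of the objects of C and the objects of D. -/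
universe u

open CategoryTheory CategoryTheory.Limits CategoryTheory.Presheaf

/-- Key lemma: if idempotents split in `C` and `e` is an equivalence of presheaf
categories, then the image under `e.inverse` of a representable presheaf is
isomorphic to a representable presheaf. -/
lemma exists_repr_of_presheaf_equiv
    {C D : Type u} [SmallCategory C] [SmallCategory D]
    (hC : IsIdempotentComplete C) (e : (Cᵒᵖ ⥤ Type u) ≌ (Dᵒᵖ ⥤ Type u)) (d : D) :
    ∃ c : C, Nonempty (e.inverse.obj (yoneda.obj d) ≅ yoneda.obj c) := by
  set T := e.inverse.obj (yoneda.obj d) with hT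
  -- `T` is a colimit of representables; apply `e.functor` and evaluate at `d`.
  have hcolim : IsColimit (e.functor.mapCocone (tautologicalCocone T)) :=
    isColimitOfPreserves e.functor (isColimitTautologicalCocone T)
  have hev : IsColimit (((evaluation Dᵒᵖ (Type u)).obj (Opposite.op d)).mapCocone
      (e.functor.mapCocone (tautologicalCocone T))) :=
    isColimitOfPreserves _ hcolim
  let φ : yoneda.obj d ≅ e.functor.obj T := (e.counitIso.app (yoneda.obj d)).symm
  obtain ⟨j, x, hx⟩ := Types.jointly_surjective _ hev (yonedaEquiv φ.hom)
  set c₀ : C := j.left with hc₀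
  let s : yoneda.obj c₀ ⟶ T := (tautologicalCocone T).ι.app j
  let g : yoneda.obj d ⟶ e.functor.obj (yoneda.obj c₀) := yonedaEquiv.symm x
  have hx' : (e.functor.map s).app (Opposite.op d) x = yonedaEquiv φ.hom := hx
  have hg : g ≫ e.functor.map s = φ.hom := by
    have := yonedaEquiv_symm_naturality_right d (e.functor.map s) x
    rw [hx'] at this
    exact this.trans (yonedaEquiv.symm_apply_apply φ.hom)
  let r : T ⟶ yoneda.obj c₀ := e.functor.preimage (φ.inv ≫ g)
  have hrs : r ≫ s = 𝟙 T := by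
    apply e.functor.map_injective
    rw [Functor.map_comp, Functor.map_preimage, Category.assoc, hg, Iso.inv_hom_id]
    exact (e.functor.map_id T).symm
  let p : c₀ ⟶ c₀ := yoneda.preimage (s ≫ r)
  have hp : yoneda.map p = s ≫ r := yoneda.map_preimage _
  have hpp : p ≫ p = p := by
    apply yoneda.map_injective
    rw [Functor.map_comp, hp, Category.assoc, ← Category.assoc r s, hrs, Category.id_comp]
  obtain ⟨c, i, q, h1, h2⟩ := hC.idempotents_split c₀ p hpp
  refine ⟨c, ⟨⟨r ≫ yoneda.map q, yoneda.map i ≫ s, ?_, ?_⟩⟩⟩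
  · rw [Category.assoc, ← Category.assoc (yoneda.map q), ← Functor.map_comp, h2, hp]
    simp only [Category.assoc]
    rw [hrs, Category.comp_id, hrs]
  · rw [Category.assoc, ← Category.assoc s r, ← hp, ← Functor.map_comp, ← Functor.map_comp]
    have hiq : i ≫ p ≫ q = 𝟙 c := by
      rw [← h2]
      simp only [Category.assoc]
      rw [← Category.assoc, h1, Category.id_comp]
    rw [hiq]
    exact yoneda.map_id c

/-- If idempotents split in small categories `C` and `D` and their presheaf
categories are equivalent, then `C` and `D` admit a Morita context given by a
bipartite category: a category structure on the disjoint union `C ⊕ D` together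
with fully faithful, essentially surjective functors from `C` and from `D`. -/
theorem moritaContext_of_presheaf_equivalence
    {C D : Type u} [SmallCategory C] [SmallCategory D]
    (hC : IsIdempotentComplete C) (hD : IsIdempotentComplete D)
    (h : Nonempty ((Cᵒᵖ ⥤ Type u) ≌ (Dᵒᵖ ⥤ Type u))) :
    ∃ (instU : Category.{u} (C ⊕ D)) (F : @Functor C _ (C ⊕ D) instU)
      (G : @Functor D _ (C ⊕ D) instU),
      F.Full ∧ F.Faithful ∧ F.EssSurj ∧ G.Full ∧ G.Faithful ∧ G.EssSurj := by
  obtain ⟨e⟩ := h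
  let P : C ⊕ D → (Cᵒᵖ ⥤ Type u) := fun x =>
    match x with
    | Sum.inl c => yoneda.obj c
    | Sum.inr d => e.inverse.obj (yoneda.obj d)
  letI instU : Category.{u} (C ⊕ D) := (inferInstance : Category.{u} (InducedCategory (Cᵒᵖ ⥤ Type u) P))
  let F : C ⥤ (C ⊕ D) :=
    { obj := Sum.inl
      map := fun f => InducedCategory.homMk (yoneda.map f)
      map_id := fun c => InducedCategory.hom_ext (yoneda.map_id c)
      map_comp := fun f g => InducedCategory.hom_ext (yoneda.map_comp f g) }
  let G : D ⥤ (C ⊕ D) :=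
    { obj := Sum.inr
      map := fun f => InducedCategory.homMk (e.inverse.map (yoneda.map f))
      map_id := fun d => InducedCategory.hom_ext <| by
        show e.inverse.map (yoneda.map (𝟙 d)) = _
        rw [yoneda.map_id, e.inverse.map_id]; rfl
      map_comp := fun f g => InducedCategory.hom_ext <| by
        show e.inverse.map (yoneda.map (f ≫ g)) = _
        rw [yoneda.map_comp, e.inverse.map_comp]; rfl }
  have hFfull : F.Full := ⟨fun t => ⟨yoneda.preimage t.hom, InducedCategory.hom_ext (yoneda.map_preimage t.hom)⟩⟩
  have hFfaith : F.Faithful := ⟨fun h => yoneda.map_injective (congrArg (fun k => k.hom) h)⟩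
  have hGfull : G.Full :=
    ⟨fun t => ⟨yoneda.preimage (e.inverse.preimage t.hom), InducedCategory.hom_ext <| by
      show e.inverse.map (yoneda.map (yoneda.preimage (e.inverse.preimage t.hom))) = t.hom
      rw [yoneda.map_preimage, e.inverse.map_preimage]⟩⟩
  have hGfaith : G.Faithful :=
    ⟨fun h => yoneda.map_injective (e.inverse.map_injective (congrArg (fun k => k.hom) h))⟩
  have hFes : F.EssSurj := by
    constructor
    rintro (c | d)
    · exact ⟨c, ⟨Iso.refl _⟩⟩
    · obtain ⟨c, ⟨ψ⟩⟩ := exists_repr_of_presheaf_equiv hC e d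
      exact ⟨c, ⟨InducedCategory.isoMk ψ.symm⟩⟩
  have hGes : G.EssSurj := by
    constructor
    rintro (c | d)
    · obtain ⟨d, ⟨ψ⟩⟩ := exists_repr_of_presheaf_equiv hD e.symm c
      -- ψ : e.symm.inverse.obj (yoneda.obj c) ≅ yoneda.obj d, i.e.
      -- e.functor.obj (yoneda.obj c) ≅ yoneda.obj d
      let χ : e.inverse.obj (yoneda.obj d) ≅ yoneda.obj c :=
        (e.inverse.mapIso ψ.symm) ≪≫ (e.unitIso.app (yoneda.obj c)).symm
      exact ⟨d, ⟨InducedCategory.isoMk χ⟩⟩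
    · exact ⟨d, ⟨Iso.refl _⟩⟩
  exact ⟨instU, F, G, hFfull, hFfaith, hFes, hGfull, hGfaith, hGes⟩
end

section
/- Let S and T be inverse semigroups. The following are equivalent: (1) the presheaf categories PSh(L(S)) and PSh(L(T)) are equivalent; (2) there is a Morita context for the categories L(S) and L(T); (3) there is a Morita context for the Cauchy completions C(S) and C(T). -/
universe u

open CategoryTheory

/-- An inverse semigroup: every element has a unique (von Neumann) inverse,
selected by `star`. -/
class InverseSemigroup (S : Type u) extends Semigroup S where
  star : S → S
  mul_star_mul : ∀ s : S, s * star s * s = s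
  star_mul_star : ∀ s : S, star s * s * star s = star s
  star_unique : ∀ s t : S, s * t * s = s → t * s * t = t → t = star s

namespace InverseSemigroup

variable {S : Type u} [InverseSemigroup S]

theorem star_star (s : S) : star (star s) = s :=
  (star_unique (star s) s (star_mul_star s) (mul_star_mul s)).symm

theorem star_idem {e : S} (he : e * e = e) : star e = e :=
  (star_unique e e (by rw [he, he]) (by rw [he, he])).symm

theorem mul_idem {e f : S} (he : e * e = e) (hf : f * f = f) :
    (e * f) * (e * f) = e * f := by
  set x := star (e * f) with hx
  have hxfix : (e * f) * x * (e * f) = e * f := mul_star_mul (e * f)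
  have hxfix' : x * (e * f) * x = x := star_mul_star (e * f)
  have he1 : ∀ y : S, e * (e * y) = e * y := fun y => by rw [← mul_assoc, he]
  have hf1 : ∀ y : S, f * (f * y) = f * y := fun y => by rw [← mul_assoc, hf]
  have A : e * (f * (x * (e * f))) = e * f := by
    simpa only [mul_assoc] using hxfix
  have B1 : ∀ y : S, x * (e * (f * (x * y))) = x * y := fun y => by
    have h := congrArg (· * y) hxfix'
    simpa only [mul_assoc] using h
  have h1 : (e * f) * (f * x * e) * (e * f) = e * f := by
    simp only [mul_assoc, hf1, he1]
    exact A
  have h2 : (f * x * e) * (e * f) * (f * x * e) = f * x * e := by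
    simp only [mul_assoc, he1, hf1, B1]
  have hC : f * x * e = x := by
    have := star_unique (e * f) (f * x * e) h1 h2
    rwa [← hx] at this
  have hCn : f * (x * e) = x := by simpa only [mul_assoc] using hC
  have key : (f * (x * e)) * (f * (x * e)) = f * (x * e) := by
    simp only [mul_assoc, B1]
  have hD : x * x = x := by rw [← hCn]; exact key
  have hE : e * f = x := (star_unique x (e * f) hxfix' hxfix).trans (star_idem hD)
  rw [hE]; exact hD

theorem idem_comm {e f : S} (he : e * e = e) (hf : f * f = f) :
    e * f = f * e := by
  have hef : (e * f) * (e * f) = e * f := mul_idem he hf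
  have hfe : (f * e) * (f * e) = f * e := mul_idem hf he
  have he1 : ∀ y : S, e * (e * y) = e * y := fun y => by rw [← mul_assoc, he]
  have hf1 : ∀ y : S, f * (f * y) = f * y := fun y => by rw [← mul_assoc, hf]
  have hefn : e * (f * (e * f)) = e * f := by simpa only [mul_assoc] using hef
  have hfen : f * (e * (f * e)) = f * e := by simpa only [mul_assoc] using hfe
  have h1 : (e * f) * (f * e) * (e * f) = e * f := by
    simp only [mul_assoc, hf1, he1]
    exact hefn
  have h2 : (f * e) * (e * f) * (f * e) = f * e := by
    simp only [mul_assoc, he1, hf1]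
    exact hfen
  have := star_unique (e * f) (f * e) h1 h2
  rw [this, star_idem hef]

theorem star_mul (a b : S) : star (a * b) = star b * star a := by
  set u := star a with hu
  set v := star b with hv
  have han : a * (u * a) = a := by simpa only [mul_assoc] using mul_star_mul a
  have hun : u * (a * u) = u := by simpa only [mul_assoc] using star_mul_star a
  have hbn : b * (v * b) = b := by simpa only [mul_assoc] using mul_star_mul b
  have hvn : v * (b * v) = v := by simpa only [mul_assoc] using star_mul_star b
  have ha1 : ∀ y : S, a * (u * (a * y)) = a * y := fun y => by
    have h := congrArg (· * y) (mul_star_mul a); simpa only [mul_assoc] using h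
  have hv1 : ∀ y : S, v * (b * (v * y)) = v * y := fun y => by
    have h := congrArg (· * y) (star_mul_star b); simpa only [mul_assoc] using h
  have hua : (u * a) * (u * a) = u * a := by
    simp only [mul_assoc]; rw [han]
  have hbv : (b * v) * (b * v) = b * v := by
    simp only [mul_assoc]; rw [hvn]
  have hc : (b * v) * (u * a) = (u * a) * (b * v) := idem_comm hbv hua
  have hc1 : ∀ y : S, b * (v * (u * (a * y))) = u * (a * (b * (v * y))) := fun y => by
    have h := congrArg (· * y) hc; simpa only [mul_assoc] using h
  have goal1 : (a * b) * (v * u) * (a * b) = a * b := by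
    simp only [mul_assoc]
    rw [hc1, ha1, hbn]
  have goal2 : (v * u) * (a * b) * (v * u) = v * u := by
    simp only [mul_assoc]
    rw [← hc1, hv1, hun]
  exact ((star_unique (a * b) (v * u) goal1 goal2)).symm

theorem star_mul_self_idem (s : S) : (star s * s) * (star s * s) = star s * s := by
  have h := congrArg (star s * ·) (mul_star_mul s)
  simpa only [mul_assoc] using h

theorem mul_star_self_idem (s : S) : (s * star s) * (s * star s) = s * star s := by
  have h := congrArg (· * star s) (mul_star_mul s)
  simpa only [mul_assoc] using h

end InverseSemigroup

open InverseSemigroup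

/-- The left-cancellative category `L(S)` of an inverse semigroup `S`: objects are
the idempotents, and a morphism `f ⟶ e` is an element `s` with `e * s = s` and
`s* * s = f`; composition is multiplication. -/
def LCat (S : Type u) [InverseSemigroup S] : Type u := {e : S // e * e = e}

namespace LCat

variable {S : Type u} [InverseSemigroup S]

instance : Category.{u} (LCat S) where
  Hom f e := {s : S // e.1 * s = s ∧ star s * s = f.1}
  id e := ⟨e.1, by rw [e.2], by rw [star_idem e.2, e.2]⟩
  comp := fun {f g e} u v => ⟨v.1 * u.1, by
      constructor
      · rw [← mul_assoc, v.2.1]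
      · calc star (v.1 * u.1) * (v.1 * u.1)
            = star u.1 * ((star v.1 * v.1) * u.1) := by
              rw [InverseSemigroup.star_mul]; simp only [mul_assoc]
          _ = star u.1 * (g.1 * u.1) := by rw [v.2.2]
          _ = star u.1 * u.1 := by rw [u.2.1]
          _ = f.1 := u.2.2⟩
  id_comp := fun {f e} u => by
    apply Subtype.ext
    show u.1 * f.1 = u.1
    have h2 := u.2.2
    calc u.1 * f.1 = u.1 * (star u.1 * u.1) := by rw [h2]
      _ = u.1 := by rw [← mul_assoc, mul_star_mul]
  comp_id := fun {f e} u => by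
    apply Subtype.ext
    show e.1 * u.1 = u.1
    exact u.2.1
  assoc := fun u v w => Subtype.ext (mul_assoc w.1 v.1 u.1).symm

end LCat

/-- A Morita context for categories `A` and `B`: a category `U` together with
weak equivalences (i.e. fully faithful and essentially surjective functors)
from `A` and from `B` to `U`. -/
def MoritaContext (A : Type u) [Category.{u} A] (B : Type u) [Category.{u} B] : Prop :=
  ∃ (U : Type u) (instU : Category.{u} U) (F : @Functor A _ U instU)
    (G : @Functor B _ U instU),
    F.Full ∧ F.Faithful ∧ F.EssSurj ∧ G.Full ∧ G.Faithful ∧ G.EssSurj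

namespace MoritaAux
open CategoryTheory.Limits


variable {C : Type u} [Category.{u} C] {D : Type u} [Category.{u} D]

/-- In every object's endomorphisms, idempotents are identities. -/
def AllIdemId (C : Type u) [Category.{u} C] : Prop :=
  ∀ (c : C) (k : c ⟶ c), k ≫ k = k → k = 𝟙 c

lemma exists_repr (E : (Cᵒᵖ ⥤ Type u) ≌ (Dᵒᵖ ⥤ Type u)) (hD : AllIdemId D) (e : C) :
    ∃ d : D, Nonempty (E.functor.obj (yoneda.obj e) ≅ yoneda.obj d) := by
  set P := E.functor.obj (yoneda.obj e) with hP
  letI myIso : coyoneda.obj (Opposite.op P) ≅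
      E.inverse ⋙ (evaluation Cᵒᵖ (Type u)).obj (Opposite.op e) :=
    NatIso.ofComponents
      (fun Y => Equiv.toIso ((E.toAdjunction.homEquiv (yoneda.obj e) Y).trans yonedaEquiv))
      (by
        intro Y Y' h
        ext g
        simp only [types_comp_apply, Equiv.toIso_hom,
          Equiv.trans_apply, Functor.comp_obj, evaluation_obj_obj, Functor.comp_map,
          evaluation_obj_map]
        show yonedaEquiv (E.toAdjunction.homEquiv _ _ (g ≫ h)) =
          (E.inverse.map h).app _ (yonedaEquiv (E.toAdjunction.homEquiv _ _ g))
        rw [Adjunction.homEquiv_naturality_right, yonedaEquiv_comp])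
  haveI : PreservesColimitsOfSize.{u, u} (coyoneda.obj (Opposite.op P)) :=
    preservesColimits_of_natIso myIso.symm
  have hc : IsColimit ((coyoneda.obj (Opposite.op P)).mapCocone
      (Presheaf.tautologicalCocone P)) :=
    isColimitOfPreserves _ (Presheaf.isColimitTautologicalCocone P)
  obtain ⟨X, g, hg⟩ := Types.jointly_surjective _ hc (𝟙 P)
  dsimp at g hg
  have hg' : g ≫ X.hom = 𝟙 P := hg
  set k : X.left ⟶ X.left := yoneda.preimage (X.hom ≫ g) with hk
  have hkk : k ≫ k = k := by
    apply yoneda.map_injective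
    simp only [hk, Functor.map_comp, Functor.map_preimage]
    exact (Category.assoc _ _ _).trans (congrArg (X.hom ≫ ·) ((Category.assoc _ _ _).symm.trans
      ((congrArg (· ≫ g) hg').trans (Category.id_comp _))))
  have hk1 : X.hom ≫ g = 𝟙 (yoneda.obj X.left) := by
    have h2 := hD _ k hkk
    have h3 := congrArg yoneda.map h2
    rwa [Functor.map_preimage, CategoryTheory.Functor.map_id] at h3
  exact ⟨X.left, ⟨{ hom := g, inv := X.hom, hom_inv_id := hg', inv_hom_id := hk1 }⟩⟩

lemma equiv_of_psh_equiv (hC : AllIdemId C) (hD : AllIdemId D)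
    (E : (Cᵒᵖ ⥤ Type u) ≌ (Dᵒᵖ ⥤ Type u)) : Nonempty (C ≌ D) := by
  let Pred : (Dᵒᵖ ⥤ Type u) → Prop := fun X => ∃ d, Nonempty (X ≅ yoneda.obj d)
  let K : C ⥤ ObjectProperty.FullSubcategory Pred :=
    ObjectProperty.lift _ (yoneda ⋙ E.functor) (fun e => exists_repr E hD e)
  let Y : D ⥤ ObjectProperty.FullSubcategory Pred :=
    ObjectProperty.lift _ yoneda (fun d => ⟨d, ⟨Iso.refl _⟩⟩)
  haveI : K.EssSurj := by
    constructor
    rintro ⟨X, hX⟩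
    obtain ⟨d, ⟨i⟩⟩ := hX
    obtain ⟨c, ⟨j⟩⟩ := exists_repr E.symm hC d
    refine ⟨c, ⟨(ObjectProperty.ι Pred).preimageIso ?_⟩⟩
    exact (E.functor.mapIso j.symm) ≪≫ E.counitIso.app (yoneda.obj d) ≪≫ i.symm
  haveI : Y.EssSurj := by
    constructor
    rintro ⟨X, hX⟩
    obtain ⟨d, ⟨i⟩⟩ := hX
    exact ⟨d, ⟨(ObjectProperty.ι Pred).preimageIso i.symm⟩⟩
  haveI : K.IsEquivalence := {}
  haveI : Y.IsEquivalence := {}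
  exact ⟨K.asEquivalence.trans Y.asEquivalence.symm⟩

end MoritaAux
namespace MoritaAux

open InverseSemigroup

universe v
variable {S : Type u} [InverseSemigroup S] {T : Type u} [InverseSemigroup T]

theorem dom_absorb (s : S) : s * (star s * s) = s := by
  rw [← mul_assoc, mul_star_mul]

/- Basic facts about `LCat` morphisms. -/
section LBasic

lemma Lhom_cod {a b : LCat S} (m : a ⟶ b) : b.1 * m.1 = m.1 := m.2.1
lemma Lhom_dom {a b : LCat S} (m : a ⟶ b) : star m.1 * m.1 = a.1 := m.2.2
lemma Lhom_dom_absorb {a b : LCat S} (m : a ⟶ b) : m.1 * a.1 = m.1 := by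
  have h := dom_absorb m.1
  rwa [Lhom_dom m] at h
lemma Lcomp_elt {a b c : LCat S} (m : a ⟶ b) (n : b ⟶ c) : (m ≫ n).1 = n.1 * m.1 := rfl
lemma Lid_elt (a : LCat S) : (𝟙 a : a ⟶ a).1 = a.1 := rfl
lemma Lhom_ext {a b : LCat S} {m n : a ⟶ b} (h : m.1 = n.1) : m = n := Subtype.ext h

lemma LCat_allIdemId : ∀ (c : LCat S) (k : c ⟶ c), k ≫ k = k → k = 𝟙 c := by
  intro c k h
  have h1 : k.1 * k.1 = k.1 := congrArg Subtype.val h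
  apply Lhom_ext
  have h2 := Lhom_dom k
  rw [star_idem h1, h1] at h2
  rw [Lid_elt]
  exact h2

/-- The inverse of an isomorphism in `LCat` is given by `star`. -/
lemma Liso_inv_elt {a b : LCat S} (φ : a ≅ b) : φ.inv.1 = star φ.hom.1 := by
  have h1 : φ.inv.1 * φ.hom.1 = a.1 := congrArg Subtype.val φ.hom_inv_id
  have h2 : φ.hom.1 * φ.inv.1 = b.1 := congrArg Subtype.val φ.inv_hom_id
  refine star_unique _ _ ?_ ?_
  · rw [mul_assoc, h1, Lhom_dom_absorb]
  · rw [mul_assoc, h2]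
    exact Lhom_dom_absorb φ.inv

lemma Liso_hom_mul_star {a b : LCat S} (φ : a ≅ b) : φ.hom.1 * star φ.hom.1 = b.1 := by
  rw [← Liso_inv_elt φ]
  exact congrArg Subtype.val φ.inv_hom_id

lemma Liso_star_mul_hom {a b : LCat S} (φ : a ≅ b) : star φ.hom.1 * φ.hom.1 = a.1 :=
  Lhom_dom φ.hom

end LBasic

section CBasic

lemma Chom_cond {a b : CauchyCat S} (m : a ⟶ b) : b.1 * m.1 * a.1 = m.1 := m.2
lemma Chom_cod {a b : CauchyCat S} (m : a ⟶ b) : b.1 * m.1 = m.1 :=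
  idem_left_absorb b.2 m.2
lemma Chom_dom_absorb {a b : CauchyCat S} (m : a ⟶ b) : m.1 * a.1 = m.1 :=
  idem_right_absorb a.2 m.2
lemma Ccomp_elt {a b c : CauchyCat S} (m : a ⟶ b) (n : b ⟶ c) : (m ≫ n).1 = n.1 * m.1 := rfl
lemma Cid_elt (a : CauchyCat S) : (𝟙 a : a ⟶ a).1 = a.1 := rfl
lemma Chom_ext {a b : CauchyCat S} {m n : a ⟶ b} (h : m.1 = n.1) : m = n := Subtype.ext h

end CBasic

/-- Conversion between the (definitionaly equal) object types. -/
def LtoC : LCat S → CauchyCat S := fun e => ⟨e.1, e.2⟩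
def CtoL : CauchyCat S → LCat S := fun e => ⟨e.1, e.2⟩

@[simp] lemma LtoC_CtoL (e : CauchyCat S) : LtoC (CtoL e) = e := rfl
@[simp] lemma CtoL_LtoC (e : LCat S) : CtoL (LtoC e) = e := rfl
@[simp] lemma LtoC_elt (e : LCat S) : (LtoC e).1 = e.1 := rfl
@[simp] lemma CtoL_elt (e : CauchyCat S) : (CtoL e).1 = e.1 := rfl

/-- An isomorphism in `CauchyCat` yields an isomorphism in `LCat` with the same element. -/
def CisoToLiso {a b : CauchyCat S} (ψ : a ≅ b) : CtoL a ≅ CtoL b := by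
  have h1 : ψ.inv.1 * ψ.hom.1 = a.1 := congrArg Subtype.val ψ.hom_inv_id
  have h2 : ψ.hom.1 * ψ.inv.1 = b.1 := congrArg Subtype.val ψ.inv_hom_id
  have hstar : ψ.inv.1 = star ψ.hom.1 := by
    refine star_unique _ _ ?_ ?_
    · rw [mul_assoc, h1, Chom_dom_absorb]
    · rw [mul_assoc, h2, Chom_dom_absorb]
  refine ⟨⟨ψ.hom.1, Chom_cod ψ.hom, ?_⟩, ⟨ψ.inv.1, Chom_cod ψ.inv, ?_⟩, ?_, ?_⟩
  · rw [← hstar]; exact h1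
  · have : star ψ.inv.1 = ψ.hom.1 := by rw [hstar, InverseSemigroup.star_star]
    rw [this]; exact h2
  · exact Lhom_ext h1
  · exact Lhom_ext h2

lemma eqToHom_elt {a b : LCat S} (h : a = b) :
    (CategoryTheory.eqToHom h : a ⟶ b).1 = a.1 := by
  subst h; rfl

end MoritaAux
namespace MoritaAux

section Push

variable {S : Type u} [InverseSemigroup S]

lemma triple (s z : S) : s * (InverseSemigroup.star s * (s * z)) = s * z := by
  rw [← mul_assoc, ← mul_assoc, InverseSemigroup.mul_star_mul]

lemma triple' (s z : S) : InverseSemigroup.star s * (s * (InverseSemigroup.star s * z)) =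
    InverseSemigroup.star s * z := by
  rw [← mul_assoc, ← mul_assoc, InverseSemigroup.star_mul_star]

lemma idem_push {e : S} (h : e * e = e) (z : S) : e * (e * z) = e * z := by
  rw [← mul_assoc, h]

lemma comm_push {a b : S} (h : a * b = b * a) (z : S) : a * (b * z) = b * (a * z) := by
  rw [← mul_assoc, h, mul_assoc]

lemma comm4_push (a w z : S) :
    a * (InverseSemigroup.star a * (w * (InverseSemigroup.star w * z))) =
    w * (InverseSemigroup.star w * (a * (InverseSemigroup.star a * z))) := by
  have h := comm_push (InverseSemigroup.idem_comm (InverseSemigroup.mul_star_self_idem a)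
    (InverseSemigroup.mul_star_self_idem w)) z
  simpa only [mul_assoc] using h

lemma cod_pushE {b mv : S} (h : b * mv = mv) (z : S) : b * (mv * z) = mv * z := by
  rw [← mul_assoc, h]

lemma dom_pushE {a mv : S} (h : InverseSemigroup.star mv * mv = a) (z : S) :
    InverseSemigroup.star mv * (mv * z) = a * z := by
  rw [← mul_assoc, h]

lemma dom_star_pushE {a mv : S} (h : InverseSemigroup.star mv * mv = a) (z : S) :
    a * (InverseSemigroup.star mv * z) = InverseSemigroup.star mv * z := by
  rw [← h, mul_assoc, triple']

lemma dom_absorbE {a mv : S} (h : InverseSemigroup.star mv * mv = a) : mv * a = mv := by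
  rw [← h, dom_absorb]

lemma dom_absorb_pushE {a mv : S} (h : InverseSemigroup.star mv * mv = a) (z : S) :
    mv * (a * z) = mv * z := by
  rw [← mul_assoc, dom_absorbE h]

end Push

section HCon

open InverseSemigroup

variable {S : Type u} [InverseSemigroup S] {T : Type u} [InverseSemigroup T]
variable (F : LCat S ⥤ LCat T)

lemma F_elt_congr {a a' b : LCat S} (ha : a = a') {m : a ⟶ b} {m' : a' ⟶ b}
    (h : m.1 = m'.1) : (F.map m).1 = (F.map m').1 := by
  subst ha
  rw [Lhom_ext h]

/-- The pullback transfer lemma: if a commuting square in `L(S)` satisfies the universal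
property of a pullback, then its image under a weak equivalence `F` satisfies a
"star-exchange" identity. -/
lemma key_pullback [F.Full] [F.Faithful] [F.EssSurj]
    {V' V U f : LCat S} (mt : V ⟶ f) (wi : U ⟶ f) (xi : V' ⟶ V) (m' : V' ⟶ U)
    (hsq : xi ≫ mt = m' ≫ wi)
    (huniv : ∀ (q : LCat S) (γ1 : q ⟶ V) (γ2 : q ⟶ U), γ1 ≫ mt = γ2 ≫ wi →
      ∃ γ : q ⟶ V', γ ≫ xi = γ1 ∧ γ ≫ m' = γ2) :
    (F.map m').1 * star (F.map xi).1 = star (F.map wi).1 * (F.map mt).1 := by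
  have hsq' := congrArg F.map hsq
  rw [F.map_comp, F.map_comp] at hsq'
  have hAx : (F.map mt).1 * (F.map xi).1 = (F.map wi).1 * (F.map m').1 :=
    congrArg Subtype.val hsq'
  -- the canonical idempotent g
  have hgg : (star (F.map mt).1 * ((F.map wi).1 * (star (F.map wi).1 * (F.map mt).1))) *
      (star (F.map mt).1 * ((F.map wi).1 * (star (F.map wi).1 * (F.map mt).1))) =
      star (F.map mt).1 * ((F.map wi).1 * (star (F.map wi).1 * (F.map mt).1)) := by
    simp only [mul_assoc]
    rw [comm4_push (F.map mt).1 (F.map wi).1, triple' (F.map wi).1, dom_absorb (F.map mt).1]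
  set g := star (F.map mt).1 * ((F.map wi).1 * (star (F.map wi).1 * (F.map mt).1)) with hgdef
  let gobj : LCat T := ⟨g, hgg⟩
  have hFVg : (F.obj V).1 * g = g := by
    rw [hgdef, dom_star_pushE (Lhom_dom (F.map mt))]
  let ig : gobj ⟶ F.obj V := ⟨g, hFVg, by rw [star_idem hgg]; exact hgg⟩
  have hAg : (F.map mt).1 * g = (F.map wi).1 * (star (F.map wi).1 * (F.map mt).1) := by
    rw [hgdef, comm4_push (F.map mt).1 (F.map wi).1, dom_absorb (F.map mt).1]
  have hgtcod : (F.obj U).1 * (star (F.map wi).1 * ((F.map mt).1 * g)) =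
      star (F.map wi).1 * ((F.map mt).1 * g) := by
    rw [dom_star_pushE (Lhom_dom (F.map wi))]
  have hgtdom : star (star (F.map wi).1 * ((F.map mt).1 * g)) *
      (star (F.map wi).1 * ((F.map mt).1 * g)) = g := by
    rw [InverseSemigroup.star_mul, InverseSemigroup.star_mul, InverseSemigroup.star_star,
      star_idem hgg]
    simp only [mul_assoc]
    rw [hAg]
    rw [triple (F.map wi).1]
    rw [show star (F.map mt).1 * ((F.map wi).1 * (star (F.map wi).1 * (F.map mt).1)) = g from
      hgdef.symm]
    exact hgg
  let hgt : gobj ⟶ F.obj U := ⟨star (F.map wi).1 * ((F.map mt).1 * g), hgtcod, hgtdom⟩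
  have hsq2 : ig ≫ F.map mt = hgt ≫ F.map wi := by
    apply Lhom_ext
    show (F.map mt).1 * g = (F.map wi).1 * (star (F.map wi).1 * ((F.map mt).1 * g))
    rw [hAg, triple (F.map wi).1]
  let q := F.objPreimage gobj
  let φ : F.obj q ≅ gobj := F.objObjPreimageIso gobj
  let γ1 : q ⟶ V := F.preimage (φ.hom ≫ ig)
  let γ2 : q ⟶ U := F.preimage (φ.hom ≫ hgt)
  have hsq3 : γ1 ≫ mt = γ2 ≫ wi := by
    apply F.map_injective
    rw [F.map_comp, F.map_comp, F.map_preimage, F.map_preimage, Category.assoc,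
      Category.assoc, hsq2]
  obtain ⟨γ, hγ1, hγ2⟩ := huniv q γ1 γ2 hsq3
  have h1 := congrArg F.map hγ1
  rw [F.map_comp, F.map_preimage] at h1
  have hxc1 : (F.map xi).1 * (F.map γ).1 = g * φ.hom.1 := congrArg Subtype.val h1
  have hgφ : g * φ.hom.1 = φ.hom.1 := Lhom_cod φ.hom
  rw [hgφ] at hxc1
  have hφg : φ.hom.1 * star φ.hom.1 = g := Liso_hom_mul_star φ
  have hgeq : g = (F.map xi).1 * ((F.map γ).1 * (star (F.map γ).1 * star (F.map xi).1)) := by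
    rw [← hφg, ← hxc1, InverseSemigroup.star_mul]
    simp only [mul_assoc]
  have hxxg : (F.map xi).1 * (star (F.map xi).1 * g) = g := by
    conv_lhs => rw [hgeq]
    rw [dom_pushE (Lhom_dom (F.map xi)), cod_pushE (Lhom_cod (F.map γ)), ← hgeq]
  have hgx : g * (F.map xi).1 = (F.map xi).1 := by
    rw [hgdef]
    simp only [mul_assoc]
    rw [hAx, triple (F.map wi).1, ← hAx, dom_pushE (Lhom_dom (F.map mt))]
    exact Lhom_cod (F.map xi)
  have hxx : (F.map xi).1 * star (F.map xi).1 = g := by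
    have h2 : g * ((F.map xi).1 * star (F.map xi).1) =
        ((F.map xi).1 * star (F.map xi).1) * g :=
      idem_comm hgg (mul_star_self_idem (F.map xi).1)
    calc (F.map xi).1 * star (F.map xi).1
        = g * ((F.map xi).1 * star (F.map xi).1) := by rw [← mul_assoc, hgx]
      _ = (F.map xi).1 * star (F.map xi).1 * g := h2
      _ = (F.map xi).1 * (star (F.map xi).1 * g) := by rw [mul_assoc]
      _ = g := hxxg
  have e1 : (F.map wi).1 * ((F.map m').1 * star (F.map xi).1) =
      (F.map mt).1 * ((F.map xi).1 * star (F.map xi).1) := by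
    rw [← mul_assoc, ← hAx, mul_assoc]
  calc (F.map m').1 * star (F.map xi).1
      = (F.obj U).1 * ((F.map m').1 * star (F.map xi).1) :=
        (cod_pushE (Lhom_cod (F.map m')) _).symm
    _ = star (F.map wi).1 * ((F.map wi).1 * ((F.map m').1 * star (F.map xi).1)) :=
        (dom_pushE (Lhom_dom (F.map wi)) _).symm
    _ = star (F.map wi).1 * ((F.map mt).1 * ((F.map xi).1 * star (F.map xi).1)) := by rw [e1]
    _ = star (F.map wi).1 * ((F.map mt).1 * g) := by rw [hxx]
    _ = star (F.map wi).1 * ((F.map wi).1 * (star (F.map wi).1 * (F.map mt).1)) := by rw [hAg]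
    _ = star (F.map wi).1 * (F.map mt).1 := triple' _ _

end HCon
end MoritaAux
namespace MoritaAux
section HFun

open InverseSemigroup

variable {S : Type u} [InverseSemigroup S] {T : Type u} [InverseSemigroup T]
variable (F : LCat S ⥤ LCat T)

/-- The domain object of a Cauchy morphism. -/
def dObj {f e : CauchyCat S} (σ : f ⟶ e) : LCat S :=
  ⟨star σ.1 * σ.1, star_mul_self_idem σ.1⟩

/-- The corestriction of a Cauchy morphism to its domain, as an `LCat` morphism. -/
def dHom {f e : CauchyCat S} (σ : f ⟶ e) : dObj σ ⟶ CtoL e :=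
  ⟨σ.1, Chom_cod σ, rfl⟩

lemma dObj_le {f e : CauchyCat S} (σ : f ⟶ e) :
    (star σ.1 * σ.1) * f.1 = star σ.1 * σ.1 := by
  rw [mul_assoc, Chom_dom_absorb σ]

/-- The inclusion of the domain of a Cauchy morphism into its source. -/
def iHom {f e : CauchyCat S} (σ : f ⟶ e) : dObj σ ⟶ CtoL f :=
  ⟨star σ.1 * σ.1,
   by show f.1 * (star σ.1 * σ.1) = star σ.1 * σ.1
      rw [idem_comm f.2 (star_mul_self_idem σ.1)]
      exact dObj_le σ,
   by show star (star σ.1 * σ.1) * (star σ.1 * σ.1) = star σ.1 * σ.1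
      rw [star_idem (star_mul_self_idem σ.1)]
      exact star_mul_self_idem σ.1⟩

/-- The element underlying the image of a Cauchy morphism. -/
def Hmap {f e : CauchyCat S} (σ : f ⟶ e) : T :=
  (F.map (dHom σ)).1 * star (F.map (iHom σ)).1

lemma Hmap_cond {f e : CauchyCat S} (σ : f ⟶ e) :
    (F.obj (CtoL e)).1 * Hmap F σ * (F.obj (CtoL f)).1 = Hmap F σ := by
  have h1 : (F.obj (CtoL e)).1 * (F.map (dHom σ)).1 = (F.map (dHom σ)).1 :=
    Lhom_cod (F.map (dHom σ))
  have h2 : star (F.map (iHom σ)).1 * (F.obj (CtoL f)).1 = star (F.map (iHom σ)).1 := by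
    have hc := Lhom_cod (F.map (iHom σ))
    have h3 := congrArg InverseSemigroup.star hc
    rw [InverseSemigroup.star_mul, star_idem (F.obj (CtoL f)).2] at h3
    exact h3
  show (F.obj (CtoL e)).1 * ((F.map (dHom σ)).1 * star (F.map (iHom σ)).1) *
      (F.obj (CtoL f)).1 = _
  rw [← mul_assoc, h1, mul_assoc, h2]
  rfl

lemma Hmap_id (e : CauchyCat S) : Hmap F (𝟙 e) = (F.obj (CtoL e)).1 := by
  have ha : dObj (𝟙 e) = CtoL e :=
    Subtype.ext (by show star e.1 * e.1 = e.1; rw [star_idem e.2, e.2])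
  have h1 : (F.map (dHom (𝟙 e))).1 = (F.map (𝟙 (CtoL e))).1 := F_elt_congr F ha rfl
  have h2 : (F.map (iHom (𝟙 e))).1 = (F.map (𝟙 (CtoL e))).1 :=
    F_elt_congr F ha (by show star e.1 * e.1 = e.1; rw [star_idem e.2, e.2])
  show (F.map (dHom (𝟙 e))).1 * star (F.map (iHom (𝟙 e))).1 = _
  rw [h1, h2, F.map_id]
  show (F.obj (CtoL e)).1 * star (F.obj (CtoL e)).1 = _
  rw [star_idem (F.obj (CtoL e)).2]
  exact (F.obj (CtoL e)).2

lemma Hmap_comp [F.Full] [F.Faithful] [F.EssSurj] {g f e : CauchyCat S}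
    (τ : g ⟶ f) (σ : f ⟶ e) :
    Hmap F (τ ≫ σ) = Hmap F σ * Hmap F τ := by
  -- the comparison morphism m' : dObj (τ ≫ σ) ⟶ dObj σ
  let m' : dObj (τ ≫ σ) ⟶ dObj σ :=
    ⟨(star σ.1 * σ.1) * τ.1,
     by show (star σ.1 * σ.1) * ((star σ.1 * σ.1) * τ.1) = (star σ.1 * σ.1) * τ.1
        exact idem_push (star_mul_self_idem σ.1) τ.1,
     by show star ((star σ.1 * σ.1) * τ.1) * ((star σ.1 * σ.1) * τ.1) =
          star (σ.1 * τ.1) * (σ.1 * τ.1)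
        rw [InverseSemigroup.star_mul, star_idem (star_mul_self_idem σ.1),
          InverseSemigroup.star_mul]
        simp only [mul_assoc]
        rw [triple' σ.1]⟩
  have hvv' : (star τ.1 * τ.1) * (star (σ.1 * τ.1) * (σ.1 * τ.1)) =
      star (σ.1 * τ.1) * (σ.1 * τ.1) := by
    have hv'v : (star (σ.1 * τ.1) * (σ.1 * τ.1)) * (star τ.1 * τ.1) =
        star (σ.1 * τ.1) * (σ.1 * τ.1) := by
      rw [InverseSemigroup.star_mul]
      simp only [mul_assoc]
      rw [dom_absorb τ.1]
    rw [idem_comm (star_mul_self_idem τ.1) (star_mul_self_idem (σ.1 * τ.1))]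
    exact hv'v
  let xiHom : dObj (τ ≫ σ) ⟶ dObj τ :=
    ⟨star (σ.1 * τ.1) * (σ.1 * τ.1),
     by show (star τ.1 * τ.1) * (star (σ.1 * τ.1) * (σ.1 * τ.1)) = _
        exact hvv',
     by show star (star (σ.1 * τ.1) * (σ.1 * τ.1)) * (star (σ.1 * τ.1) * (σ.1 * τ.1)) = _
        rw [star_idem (star_mul_self_idem (σ.1 * τ.1))]
        exact star_mul_self_idem (σ.1 * τ.1)⟩
  -- the square commutes
  have hsq : xiHom ≫ dHom τ = m' ≫ iHom σ := by
    apply Lhom_ext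
    show τ.1 * (star (σ.1 * τ.1) * (σ.1 * τ.1)) =
      (star σ.1 * σ.1) * ((star σ.1 * σ.1) * τ.1)
    have hc := comm_push (idem_comm (mul_star_self_idem τ.1) (star_mul_self_idem σ.1)) τ.1
    simp only [mul_assoc] at hc
    rw [dom_absorb τ.1] at hc
    rw [InverseSemigroup.star_mul]
    simp only [mul_assoc]
    rw [triple' σ.1]
    exact hc
  -- the universal property
  have huniv : ∀ (q : LCat S) (γ1 : q ⟶ dObj τ) (γ2 : q ⟶ dObj σ),
      γ1 ≫ dHom τ = γ2 ≫ iHom σ →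
      ∃ γ : q ⟶ dObj (τ ≫ σ), γ ≫ xiHom = γ1 ∧ γ ≫ m' = γ2 := by
    intro q γ1 γ2 hsq0
    have he : τ.1 * γ1.1 = (star σ.1 * σ.1) * γ2.1 := congrArg Subtype.val hsq0
    have hcod2 : (star σ.1 * σ.1) * γ2.1 = γ2.1 := Lhom_cod γ2
    have he' : τ.1 * γ1.1 = γ2.1 := he.trans hcod2
    have hcod1 : (star τ.1 * τ.1) * γ1.1 = γ1.1 := Lhom_cod γ1
    have hstep : star σ.1 * (σ.1 * γ2.1) = γ2.1 := by rw [← mul_assoc]; exact hcod2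
    have hstep2 : star τ.1 * (τ.1 * γ1.1) = γ1.1 := by rw [← mul_assoc]; exact hcod1
    have hv'c : (star (σ.1 * τ.1) * (σ.1 * τ.1)) * γ1.1 = γ1.1 := by
      rw [InverseSemigroup.star_mul]
      simp only [mul_assoc]
      rw [he', hstep, ← he', hstep2]
    refine ⟨⟨γ1.1, hv'c, Lhom_dom γ1⟩, ?_, ?_⟩
    · apply Lhom_ext
      show (star (σ.1 * τ.1) * (σ.1 * τ.1)) * γ1.1 = γ1.1
      exact hv'c
    · apply Lhom_ext
      show ((star σ.1 * σ.1) * τ.1) * γ1.1 = γ2.1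
      rw [mul_assoc, he']
      exact hcod2
  have hkey := key_pullback F (dHom τ) (iHom σ) xiHom m' hsq huniv
  -- functoriality relations
  have hc2 : dHom (τ ≫ σ) = m' ≫ dHom σ := by
    apply Lhom_ext
    show σ.1 * τ.1 = σ.1 * ((star σ.1 * σ.1) * τ.1)
    exact (dom_absorb_pushE rfl τ.1).symm
  have hc3 : iHom (τ ≫ σ) = xiHom ≫ iHom τ := by
    apply Lhom_ext
    show star (σ.1 * τ.1) * (σ.1 * τ.1) =
      (star τ.1 * τ.1) * (star (σ.1 * τ.1) * (σ.1 * τ.1))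
    exact hvv'.symm
  show (F.map (dHom (τ ≫ σ))).1 * star (F.map (iHom (τ ≫ σ))).1 = _
  rw [hc2, hc3, F.map_comp, F.map_comp]
  show ((F.map (dHom σ)).1 * (F.map m').1) *
      star ((F.map (iHom τ)).1 * (F.map xiHom).1) =
    ((F.map (dHom σ)).1 * star (F.map (iHom σ)).1) *
      ((F.map (dHom τ)).1 * star (F.map (iHom τ)).1)
  rw [InverseSemigroup.star_mul]
  simp only [mul_assoc]
  rw [← mul_assoc (F.map m').1, hkey, mul_assoc]

/-- The induced functor on the Cauchy completions. -/
def Hfun [F.Full] [F.Faithful] [F.EssSurj] : CauchyCat S ⥤ CauchyCat T where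
  obj e := LtoC (F.obj (CtoL e))
  map {f e} σ := ⟨Hmap F σ, Hmap_cond F σ⟩
  map_id e := Chom_ext (show Hmap F (𝟙 e) = (F.obj (CtoL e)).1 from Hmap_id F e)
  map_comp {g f e} τ σ :=
    Chom_ext (show Hmap F (τ ≫ σ) = Hmap F σ * Hmap F τ from Hmap_comp F τ σ)

end HFun
end MoritaAux
namespace MoritaAux
section HProps

open InverseSemigroup

variable {S : Type u} [InverseSemigroup S] {T : Type u} [InverseSemigroup T]

lemma dom_starE {S : Type u} [InverseSemigroup S] {a mv : S}
    (h : star mv * mv = a) : a * star mv = star mv := by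
  rw [← h, InverseSemigroup.star_mul_star]

/-- An isomorphism in `LCat` yields an isomorphism in `CauchyCat`. -/
def LisoToCiso {a b : LCat T} (φ : a ≅ b) : LtoC a ≅ LtoC b where
  hom := ⟨φ.hom.1, by
    show b.1 * φ.hom.1 * a.1 = φ.hom.1
    rw [Lhom_cod φ.hom, Lhom_dom_absorb φ.hom]⟩
  inv := ⟨φ.inv.1, by
    show a.1 * φ.inv.1 * b.1 = φ.inv.1
    rw [Lhom_cod φ.inv, Lhom_dom_absorb φ.inv]⟩
  hom_inv_id := Chom_ext (show φ.inv.1 * φ.hom.1 = a.1 from congrArg Subtype.val φ.hom_inv_id)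
  inv_hom_id := Chom_ext (show φ.hom.1 * φ.inv.1 = b.1 from congrArg Subtype.val φ.inv_hom_id)

variable (F : LCat S ⥤ LCat T)

lemma Hmap_star_mul {f e : CauchyCat S} (σ : f ⟶ e) :
    star (Hmap F σ) * Hmap F σ =
    (F.map (iHom σ)).1 * star (F.map (iHom σ)).1 := by
  show star ((F.map (dHom σ)).1 * star (F.map (iHom σ)).1) *
      ((F.map (dHom σ)).1 * star (F.map (iHom σ)).1) = _
  rw [InverseSemigroup.star_mul, InverseSemigroup.star_star]
  simp only [mul_assoc]
  rw [dom_pushE (Lhom_dom (F.map (dHom σ))), dom_starE (Lhom_dom (F.map (iHom σ)))]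

lemma ueq [F.Full] [F.Faithful] {U U' f0 : LCat S} (wi : U ⟶ f0) (wi' : U' ⟶ f0)
    (hU : wi.1 = U.1) (hU' : wi'.1 = U'.1)
    (h : (F.map wi).1 * star (F.map wi).1 = (F.map wi').1 * star (F.map wi').1) :
    U = U' := by
  -- build the comparison morphism k : F.obj U' ⟶ F.obj U
  have mk_k : ∀ (A B f1 : LCat S) (a : A ⟶ f1) (b : B ⟶ f1),
      (F.map a).1 * star (F.map a).1 = (F.map b).1 * star (F.map b).1 →
      ∃ κ : B ⟶ A, κ ≫ a = b := by
    intro A B f1 a b hab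
    have hk_cod : (F.obj A).1 * (star (F.map a).1 * (F.map b).1) =
        star (F.map a).1 * (F.map b).1 := dom_star_pushE (Lhom_dom (F.map a)) _
    have hk_dom : star (star (F.map a).1 * (F.map b).1) *
        (star (F.map a).1 * (F.map b).1) = (F.obj B).1 := by
      rw [InverseSemigroup.star_mul, InverseSemigroup.star_star]
      simp only [mul_assoc]
      rw [← mul_assoc (F.map a).1, hab]
      rw [InverseSemigroup.mul_star_mul (F.map b).1]
      exact Lhom_dom (F.map b)
    refine ⟨F.preimage ⟨star (F.map a).1 * (F.map b).1, hk_cod, hk_dom⟩, ?_⟩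
    apply F.map_injective
    rw [F.map_comp, F.map_preimage]
    apply Lhom_ext
    show (F.map a).1 * (star (F.map a).1 * (F.map b).1) = (F.map b).1
    rw [← mul_assoc, hab]
    exact InverseSemigroup.mul_star_mul (F.map b).1
  obtain ⟨κ, hκ⟩ := mk_k U U' f0 wi wi' h
  obtain ⟨κ', hκ'⟩ := mk_k U' U f0 wi' wi h.symm
  have helt : wi.1 * κ.1 = wi'.1 := congrArg Subtype.val hκ
  have helt' : wi'.1 * κ'.1 = wi.1 := congrArg Subtype.val hκ'
  rw [hU] at helt
  rw [hU'] at helt'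
  have hcκ : U.1 * κ.1 = κ.1 := Lhom_cod κ
  have hcκ' : U'.1 * κ'.1 = κ'.1 := Lhom_cod κ'
  have h1 : κ.1 = wi'.1 := hcκ.symm.trans helt
  have h2 : κ'.1 = wi.1 := hcκ'.symm.trans helt'
  rw [h1, hU'] at hcκ
  rw [h2, hU] at hcκ'
  -- hcκ : U.1 * U'.1 = U'.1, hcκ' : U'.1 * U.1 = U.1
  apply Subtype.ext
  exact hcκ'.symm.trans ((idem_comm U'.2 U.2).trans hcκ)

lemma Hfun_faithful [F.Full] [F.Faithful] [F.EssSurj] : (Hfun F).Faithful := by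
  constructor
  intro f e σ σ' h
  have helt : Hmap F σ = Hmap F σ' := congrArg Subtype.val h
  have hss : (F.map (iHom σ)).1 * star (F.map (iHom σ)).1 =
      (F.map (iHom σ')).1 * star (F.map (iHom σ')).1 := by
    rw [← Hmap_star_mul, ← Hmap_star_mul, helt]
  have hUU : dObj σ = dObj σ' := ueq F (iHom σ) (iHom σ') rfl rfl hss
  have hw : (F.map (iHom σ)).1 = (F.map (iHom σ')).1 :=
    F_elt_congr F hUU (congrArg Subtype.val hUU)
  have hback : ∀ {f' e' : CauchyCat S} (ρ : f' ⟶ e'),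
      Hmap F ρ * (F.map (iHom ρ)).1 = (F.map (dHom ρ)).1 := by
    intro f' e' ρ
    show ((F.map (dHom ρ)).1 * star (F.map (iHom ρ)).1) * (F.map (iHom ρ)).1 = _
    rw [mul_assoc, Lhom_dom (F.map (iHom ρ))]
    exact Lhom_dom_absorb (F.map (dHom ρ))
  have hM : (F.map (dHom σ)).1 = (F.map (dHom σ')).1 := by
    rw [← hback σ, ← hback σ', helt, hw]
  -- transport along hUU using eqToHom
  have heq : eqToHom hUU ≫ dHom σ' = dHom σ := by
    apply F.map_injective
    apply Lhom_ext
    rw [F.map_comp, eqToHom_map]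
    show (F.map (dHom σ')).1 * (eqToHom (congrArg F.obj hUU)).1 = (F.map (dHom σ)).1
    rw [eqToHom_elt, hM]
    rw [show (F.obj (dObj σ)).1 = (F.obj (dObj σ')).1 from
      congrArg (fun z => (F.obj z).1) hUU]
    exact Lhom_dom_absorb (F.map (dHom σ'))
  have hval := congrArg Subtype.val heq
  have hval2 : σ'.1 * (eqToHom hUU : dObj σ ⟶ dObj σ').1 = σ.1 := hval
  rw [eqToHom_elt] at hval2
  rw [show (dObj σ).1 = (dObj σ').1 from congrArg Subtype.val hUU] at hval2
  have hfin : σ'.1 * (dObj σ').1 = σ'.1 := Lhom_dom_absorb (dHom σ')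
  exact Chom_ext ((hfin.symm.trans hval2).symm)

lemma Hfun_full [F.Full] [F.Faithful] [F.EssSurj] : (Hfun F).Full := by
  constructor
  intro f e d
  -- d : LtoC (F.obj (CtoL f)) ⟶ LtoC (F.obj (CtoL e))
  have hde : (F.obj (CtoL e)).1 * d.1 = d.1 := Chom_cod d
  have hdf : d.1 * (F.obj (CtoL f)).1 = d.1 := Chom_dom_absorb d
  have hp'idem : (star d.1 * d.1) * (star d.1 * d.1) = star d.1 * d.1 :=
    star_mul_self_idem d.1
  have hp'f : (star d.1 * d.1) * (F.obj (CtoL f)).1 = star d.1 * d.1 := by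
    rw [mul_assoc, hdf]
  have hfp' : (F.obj (CtoL f)).1 * (star d.1 * d.1) = star d.1 * d.1 := by
    rw [idem_comm (F.obj (CtoL f)).2 hp'idem]
    exact hp'f
  let P' : LCat T := ⟨star d.1 * d.1, hp'idem⟩
  let ip : P' ⟶ F.obj (CtoL f) := ⟨star d.1 * d.1, hfp',
    by rw [star_idem hp'idem]; exact hp'idem⟩
  let φ : F.obj (F.objPreimage P') ≅ P' := F.objObjPreimageIso P'
  let χ : F.objPreimage P' ⟶ CtoL f := F.preimage (φ.hom ≫ ip)
  have hz_cod : f.1 * χ.1 = χ.1 := Lhom_cod χ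
  have hz_dom : star χ.1 * χ.1 = (F.objPreimage P').1 := Lhom_dom χ
  have hu : (χ.1 * star χ.1) * (χ.1 * star χ.1) = χ.1 * star χ.1 :=
    mul_star_self_idem χ.1
  have hfu : f.1 * (χ.1 * star χ.1) = χ.1 * star χ.1 := by
    rw [← mul_assoc, hz_cod]
  let U : LCat S := ⟨χ.1 * star χ.1, hu⟩
  let iU : U ⟶ CtoL f := ⟨χ.1 * star χ.1, hfu, by rw [star_idem hu]; exact hu⟩
  let χhat : F.objPreimage P' ⟶ U :=
    ⟨χ.1, InverseSemigroup.mul_star_mul χ.1, hz_dom⟩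
  let χinv : U ⟶ F.objPreimage P' :=
    ⟨star χ.1, dom_starE hz_dom,
     by rw [InverseSemigroup.star_star]⟩
  have hretr2 : χinv ≫ χhat = 𝟙 U := Lhom_ext (show χ.1 * star χ.1 = U.1 from rfl)
  have hretr1 : χhat ≫ χinv = 𝟙 (F.objPreimage P') :=
    Lhom_ext (show star χ.1 * χ.1 = (F.objPreimage P').1 from hz_dom)
  have hcc' : (F.map χhat).1 * (F.map χinv).1 = (F.obj U).1 := by
    have h1 := congrArg F.map hretr2
    rw [F.map_comp, F.map_id] at h1
    exact congrArg Subtype.val h1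
  have hc'c : (F.map χinv).1 * (F.map χhat).1 = (F.obj (F.objPreimage P')).1 := by
    have h1 := congrArg F.map hretr1
    rw [F.map_comp, F.map_id] at h1
    exact congrArg Subtype.val h1
  have hstarc : star (F.map χhat).1 = (F.map χinv).1 := by
    refine (star_unique _ _ ?_ ?_).symm
    · rw [hcc']
      exact Lhom_cod (F.map χhat)
    · rw [hc'c]
      exact Lhom_cod (F.map χinv)
  have hχ : χ = χhat ≫ iU :=
    Lhom_ext (show χ.1 = (χ.1 * star χ.1) * χ.1 from
      (InverseSemigroup.mul_star_mul χ.1).symm)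
  have h6 := congrArg F.map hχ
  rw [F.map_comp] at h6
  have hwc : (F.map χ).1 = (F.map iU).1 * (F.map χhat).1 := congrArg Subtype.val h6
  have h7 : (F.map χ).1 = (star d.1 * d.1) * φ.hom.1 :=
    congrArg Subtype.val (F.map_preimage (φ.hom ≫ ip))
  have hφφ : φ.hom.1 * star φ.hom.1 = star d.1 * d.1 := Liso_hom_mul_star φ
  have o1 : (F.map iU).1 * star (F.map iU).1 = star d.1 * d.1 := by
    calc (F.map iU).1 * star (F.map iU).1
        = (F.map iU).1 * ((F.obj U).1 * star (F.map iU).1) :=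
          (congrArg (fun t => (F.map iU).1 * t) (dom_starE (Lhom_dom (F.map iU)))).symm
      _ = (F.map iU).1 * (((F.map χhat).1 * (F.map χinv).1) * star (F.map iU).1) :=
          (congrArg (fun t => (F.map iU).1 * (t * star (F.map iU).1)) hcc').symm
      _ = ((F.map iU).1 * (F.map χhat).1) * ((F.map χinv).1 * star (F.map iU).1) := by
          simp only [mul_assoc]
      _ = ((F.map iU).1 * (F.map χhat).1) *
          (star (F.map χhat).1 * star (F.map iU).1) := by rw [hstarc]
      _ = ((F.map iU).1 * (F.map χhat).1) * star ((F.map iU).1 * (F.map χhat).1) := by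
          rw [InverseSemigroup.star_mul]
      _ = (F.map χ).1 * star (F.map χ).1 := by rw [hwc]
      _ = ((star d.1 * d.1) * φ.hom.1) * star ((star d.1 * d.1) * φ.hom.1) := by rw [h7]
      _ = star d.1 * d.1 := by
          rw [InverseSemigroup.star_mul, star_idem hp'idem]
          simp only [mul_assoc]
          rw [← mul_assoc φ.hom.1, hφφ, hp'idem, dom_absorb d.1]
  have hM1 : (F.obj (CtoL e)).1 * (d.1 * (F.map iU).1) = d.1 * (F.map iU).1 := by
    rw [← mul_assoc, hde]
  have hM2 : star (d.1 * (F.map iU).1) * (d.1 * (F.map iU).1) = (F.obj U).1 := by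
    rw [InverseSemigroup.star_mul]
    simp only [mul_assoc]
    rw [← mul_assoc (star d.1) d.1, ← o1]
    rw [InverseSemigroup.mul_star_mul (F.map iU).1]
    exact Lhom_dom (F.map iU)
  let n : U ⟶ CtoL e := F.preimage ⟨d.1 * (F.map iU).1, hM1, hM2⟩
  have hn_elt : (F.map n).1 = d.1 * (F.map iU).1 :=
    congrArg Subtype.val (F.map_preimage _)
  have hn_cod : e.1 * n.1 = n.1 := Lhom_cod n
  have hn_dom : star n.1 * n.1 = χ.1 * star χ.1 := Lhom_dom n
  have hzu : n.1 * (χ.1 * star χ.1) = n.1 := dom_absorbE hn_dom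
  have hUf : (χ.1 * star χ.1) * f.1 = χ.1 * star χ.1 := by
    rw [idem_comm hu f.2]
    exact hfu
  have hz'f : e.1 * n.1 * f.1 = n.1 := by
    rw [hn_cod]
    calc n.1 * f.1 = (n.1 * (χ.1 * star χ.1)) * f.1 := by rw [hzu]
      _ = n.1 * ((χ.1 * star χ.1) * f.1) := by rw [mul_assoc]
      _ = n.1 * (χ.1 * star χ.1) := by rw [hUf]
      _ = n.1 := hzu
  refine ⟨⟨n.1, hz'f⟩, ?_⟩
  apply Chom_ext
  show Hmap F ⟨n.1, hz'f⟩ = d.1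
  have hU2 : dObj (⟨n.1, hz'f⟩ : f ⟶ e) = U := Subtype.ext hn_dom
  have h8 : (F.map (dHom (⟨n.1, hz'f⟩ : f ⟶ e))).1 = (F.map n).1 :=
    F_elt_congr F hU2 rfl
  have h10 : (F.map (iHom (⟨n.1, hz'f⟩ : f ⟶ e))).1 = (F.map iU).1 :=
    F_elt_congr F hU2 hn_dom
  show (F.map (dHom (⟨n.1, hz'f⟩ : f ⟶ e))).1 *
      star (F.map (iHom (⟨n.1, hz'f⟩ : f ⟶ e))).1 = d.1
  rw [h8, h10, hn_elt, mul_assoc, o1]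
  exact dom_absorb d.1

lemma Hfun_essSurj [F.Full] [F.Faithful] [F.EssSurj] : (Hfun F).EssSurj := by
  constructor
  intro e'
  exact ⟨LtoC (F.objPreimage (CtoL e')),
    ⟨LisoToCiso (F.objObjPreimageIso (CtoL e'))⟩⟩

end HProps
end MoritaAux
namespace MoritaAux
section GFun

open InverseSemigroup

variable {S : Type u} [InverseSemigroup S] {T : Type u} [InverseSemigroup T]
variable (H : CauchyCat S ⥤ CauchyCat T)

/-- The faithful inclusion `L(S) → C(S)`. -/
def Jmap {u e : LCat S} (m : u ⟶ e) : LtoC u ⟶ LtoC e :=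
  ⟨m.1, by
    show e.1 * m.1 * u.1 = m.1
    rw [Lhom_cod m, Lhom_dom_absorb m]⟩

lemma Jmap_id (u : LCat S) : Jmap (𝟙 u) = 𝟙 (LtoC u) := Chom_ext rfl

lemma Jmap_comp {u v w : LCat S} (m : u ⟶ v) (n : v ⟶ w) :
    Jmap (m ≫ n) = Jmap m ≫ Jmap n := Chom_ext rfl

/-- The canonical retraction of `Jmap m` in `C(S)`. -/
def Jretr {u e : LCat S} (m : u ⟶ e) : LtoC e ⟶ LtoC u :=
  ⟨star m.1, by
    show u.1 * star m.1 * e.1 = star m.1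
    rw [dom_starE (Lhom_dom m)]
    have h1 := congrArg InverseSemigroup.star (Lhom_cod m)
    rw [InverseSemigroup.star_mul, star_idem e.2] at h1
    exact h1⟩

lemma Jretr_comp {u e : LCat S} (m : u ⟶ e) : Jmap m ≫ Jretr m = 𝟙 (LtoC u) :=
  Chom_ext (show star m.1 * m.1 = u.1 from Lhom_dom m)

variable [H.Full] [H.Faithful]

lemma Gmap_dom {u e : LCat S} (m : u ⟶ e) :
    star (H.map (Jmap m)).1 * (H.map (Jmap m)).1 = (H.obj (LtoC u)).1 := by
  have hret := congrArg H.map (Jretr_comp m)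
  rw [H.map_comp, H.map_id] at hret
  have h1 : (H.map (Jretr m)).1 * (H.map (Jmap m)).1 = (H.obj (LtoC u)).1 :=
    congrArg Subtype.val hret
  have hstar : star (H.map (Jmap m)).1 = (H.map (Jretr m)).1 := by
    refine (star_unique _ _ ?_ ?_).symm
    · rw [mul_assoc, h1, Chom_dom_absorb (H.map (Jmap m))]
    · rw [h1]
      exact Chom_cod (H.map (Jretr m))
  rw [hstar]
  exact h1

/-- The induced functor on the left-cancellative categories. -/
def Gfun : LCat S ⥤ LCat T where
  obj e := CtoL (H.obj (LtoC e))
  map {u e} m := ⟨(H.map (Jmap m)).1, Chom_cod (H.map (Jmap m)), Gmap_dom H m⟩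
  map_id e := Lhom_ext (by
    show (H.map (Jmap (𝟙 e))).1 = (H.obj (LtoC e)).1
    rw [Jmap_id, H.map_id]
    rfl)
  map_comp {u v w} m n := Lhom_ext (by
    show (H.map (Jmap (m ≫ n))).1 = _
    rw [Jmap_comp, H.map_comp]
    rfl)

lemma Gfun_faithful : (Gfun H).Faithful := by
  constructor
  intro u e m m' h
  have h1 := congrArg Subtype.val h
  have h2 : H.map (Jmap m) = H.map (Jmap m') := Chom_ext h1
  have h3 := H.map_injective h2
  have h4 := congrArg Subtype.val h3
  exact Lhom_ext h4

lemma Gfun_full : (Gfun H).Full := by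
  constructor
  intro u e n
  -- n : CtoL (H.obj (LtoC u)) ⟶ CtoL (H.obj (LtoC e)) in LCat T
  have hcodn : (H.obj (LtoC e)).1 * n.1 = n.1 := Lhom_cod n
  have hdomn : star n.1 * n.1 = (H.obj (LtoC u)).1 := Lhom_dom n
  have hdan : n.1 * (H.obj (LtoC u)).1 = n.1 := Lhom_dom_absorb n
  let nC : H.obj (LtoC u) ⟶ H.obj (LtoC e) :=
    ⟨n.1, by
      show (H.obj (LtoC e)).1 * n.1 * (H.obj (LtoC u)).1 = n.1
      rw [hcodn, hdan]⟩
  let rC : H.obj (LtoC e) ⟶ H.obj (LtoC u) :=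
    ⟨star n.1, by
      show (H.obj (LtoC u)).1 * star n.1 * (H.obj (LtoC e)).1 = star n.1
      rw [dom_starE hdomn]
      have h1 := congrArg InverseSemigroup.star hcodn
      rw [InverseSemigroup.star_mul, star_idem (H.obj (LtoC e)).2] at h1
      exact h1⟩
  let c : LtoC u ⟶ LtoC e := H.preimage nC
  let r0 : LtoC e ⟶ LtoC u := H.preimage rC
  have hcr : c ≫ r0 = 𝟙 (LtoC u) := by
    apply H.map_injective
    rw [H.map_comp, H.map_preimage, H.map_preimage, H.map_id]
    exact Chom_ext (show star n.1 * n.1 = (H.obj (LtoC u)).1 from hdomn)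
  have helt : r0.1 * c.1 = u.1 := congrArg Subtype.val hcr
  have hcu : c.1 * u.1 = c.1 := Chom_dom_absorb c
  have hur : u.1 * r0.1 = r0.1 := Chom_cod r0
  have hstar : star c.1 = r0.1 := by
    refine (star_unique _ _ ?_ ?_).symm
    · rw [mul_assoc, helt, hcu]
    · rw [helt]
      exact hur
  have hdom : star c.1 * c.1 = u.1 := by rw [hstar]; exact helt
  refine ⟨⟨c.1, Chom_cod c, hdom⟩, ?_⟩
  apply Lhom_ext
  show (H.map (Jmap ⟨c.1, Chom_cod c, hdom⟩)).1 = n.1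
  have hJc : Jmap (⟨c.1, Chom_cod c, hdom⟩ : u ⟶ e) = c := Chom_ext rfl
  exact (congrArg (fun z => (H.map z).1) hJc).trans (congrArg Subtype.val (H.map_preimage nC))

lemma Gfun_essSurj [H.EssSurj] : (Gfun H).EssSurj := by
  constructor
  intro e'
  refine ⟨CtoL (H.objPreimage (LtoC e')), ?_⟩
  exact ⟨CisoToLiso (H.objObjPreimageIso (LtoC e'))⟩

end GFun
end MoritaAux
namespace MoritaAux

lemma moritaContext_of_weq {A B : Type u} [Category.{u} A] [Category.{u} B]
    (F : A ⥤ B) (h1 : F.Full) (h2 : F.Faithful) (h3 : F.EssSurj) : MoritaContext A B :=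
  ⟨B, inferInstance, F, 𝟭 B, h1, h2, h3, inferInstance, inferInstance, inferInstance⟩

lemma moritaContext_equiv {A B : Type u} [Category.{u} A] [Category.{u} B]
    (h : MoritaContext A B) : Nonempty (A ≌ B) := by
  obtain ⟨U, instU, F, G, hF1, hF2, hF3, hG1, hG2, hG3⟩ := h
  letI := instU
  haveI := hF1; haveI := hF2; haveI := hF3
  haveI := hG1; haveI := hG2; haveI := hG3
  haveI : F.IsEquivalence := {}
  haveI : G.IsEquivalence := {}
  exact ⟨F.asEquivalence.trans G.asEquivalence.symm⟩

end MoritaAux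

open MoritaAux in
/-- For inverse semigroups `S` and `T`, the following are equivalent: the
classifying toposes `PSh(L(S))` and `PSh(L(T))` are equivalent; `L(S)` and `L(T)`
form a Morita context; `C(S)` and `C(T)` form a Morita context. -/
theorem classifying_topos_equivalence_iff_moritaContext
    (S T : Type u) [InverseSemigroup S] [InverseSemigroup T] :
    (Nonempty (((LCat S)ᵒᵖ ⥤ Type u) ≌ ((LCat T)ᵒᵖ ⥤ Type u)) ↔
      MoritaContext (LCat S) (LCat T)) ∧
    (Nonempty (((LCat S)ᵒᵖ ⥤ Type u) ≌ ((LCat T)ᵒᵖ ⥤ Type u)) ↔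
      MoritaContext (CauchyCat S) (CauchyCat T)) := by
  constructor
  · constructor
    · rintro ⟨E⟩
      obtain ⟨eq⟩ := equiv_of_psh_equiv LCat_allIdemId LCat_allIdemId E
      exact moritaContext_of_weq eq.functor inferInstance inferInstance inferInstance
    · intro m
      obtain ⟨eq⟩ := moritaContext_equiv m
      exact ⟨Equivalence.congrLeft eq.op⟩
  · constructor
    · rintro ⟨E⟩
      obtain ⟨eq⟩ := equiv_of_psh_equiv LCat_allIdemId LCat_allIdemId E
      exact moritaContext_of_weq (Hfun eq.functor) (Hfun_full eq.functor)
        (Hfun_faithful eq.functor) (Hfun_essSurj eq.functor)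
    · intro m
      obtain ⟨eq⟩ := moritaContext_equiv m
      haveI h1 := Gfun_full eq.functor
      haveI h2 := Gfun_faithful eq.functor
      haveI h3 := Gfun_essSurj eq.functor
      haveI : (Gfun eq.functor).IsEquivalence := {}
      exact ⟨Equivalence.congrLeft (Gfun eq.functor).asEquivalence.op⟩
end

section
/- Let S be an inverse semigroup. Then S is locally E-unitary if and only if the category L(S) is right-cancellative, i.e. every morphism of L(S) is an epimorphism. -/
universe u

open CategoryTheory

open InverseSemigroup

/-- An inverse semigroup is locally E-unitary if each local submonoid `eSe` is
E-unitary: whenever `d ∈ eSe` is idempotent, `s ∈ eSe`, and `d ≤ s` in the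
natural partial order (`d = s * d* * d`), then `s` is idempotent. -/
def LocallyEUnitary (S : Type u) [InverseSemigroup S] : Prop :=
  ∀ e : S, e * e = e →
    ∀ s d : S, e * s * e = s → e * d * e = d → d * d = d →
      d = s * star d * d → s * s = s

theorem mulext {S : Type u} [InverseSemigroup S] {x y z : S} (h : x * y = z) (t : S) :
    x * (y * t) = z * t := by rw [← mul_assoc, h]

/-- An inverse semigroup is locally E-unitary if and only if the category `L(S)`
is right-cancellative, i.e. every morphism of `L(S)` is an epimorphism. -/
theorem locallyEUnitary_iff_lcat_right_cancellative
    (S : Type u) [InverseSemigroup S] :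
    LocallyEUnitary S ↔ ∀ (f e : LCat S) (φ : f ⟶ e), Epi φ := by
  constructor
  · -- locally E-unitary ⇒ every morphism is epi
    intro hLE f e φ
    refine ⟨fun {Z} α β h => ?_⟩
    apply Subtype.ext
    have h' : α.1 * φ.1 = β.1 * φ.1 := congrArg Subtype.val h
    obtain ⟨a, hga, haa⟩ := α
    obtain ⟨b, hgb, hbb⟩ := β
    have hσe : e.1 * φ.1 = φ.1 := φ.2.1
    set σ := φ.1 with hσdef
    set g := Z.1 with hgdef
    show a = b
    simp only at h' hga haa hgb hbb ⊢
    have hgg : g * g = g := Z.2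
    have hsg : InverseSemigroup.star g = g := star_idem hgg
    have hbg : InverseSemigroup.star b * g = InverseSemigroup.star b := by
      have h1 := congrArg InverseSemigroup.star hgb
      rwa [InverseSemigroup.star_mul, hsg] at h1
    have hag : InverseSemigroup.star a * g = InverseSemigroup.star a := by
      have h1 := congrArg InverseSemigroup.star hga
      rwa [InverseSemigroup.star_mul, hsg] at h1
    have h'' : ∀ x : S, a * (σ * x) = b * (σ * x) := fun x => by
      have h1 := congrArg (· * x) h'
      simpa only [mul_assoc] using h1
    have hσT : ∀ x : S, σ * (InverseSemigroup.star σ * (σ * (InverseSemigroup.star σ * x)))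
        = σ * (InverseSemigroup.star σ * x) := fun x => by
      have h1 := congrArg (· * x) (mul_star_self_idem σ)
      simpa only [mul_assoc] using h1
    have hwg : g * (a * InverseSemigroup.star b) * g = a * InverseSemigroup.star b := by
      simp only [mul_assoc]
      rw [hbg, ← mul_assoc, hga]
    have hdg : g * (a * (σ * (InverseSemigroup.star σ * InverseSemigroup.star a))) * g
        = a * (σ * (InverseSemigroup.star σ * InverseSemigroup.star a)) := by
      simp only [mul_assoc]
      rw [hag, ← mul_assoc, hga]
    have hdd : (a * (σ * (InverseSemigroup.star σ * InverseSemigroup.star a)))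
        * (a * (σ * (InverseSemigroup.star σ * InverseSemigroup.star a)))
        = a * (σ * (InverseSemigroup.star σ * InverseSemigroup.star a)) := by
      simp only [mul_assoc]
      rw [mulext haa, mulext hσe, hσT]
    have hwd : (a * InverseSemigroup.star b)
        * (a * (σ * (InverseSemigroup.star σ * InverseSemigroup.star a)))
        = a * (σ * (InverseSemigroup.star σ * InverseSemigroup.star a)) := by
      simp only [mul_assoc]
      rw [h'', mulext hbb, mulext hσe, h'']
    have hle2 : a * (σ * (InverseSemigroup.star σ * InverseSemigroup.star a))
        = (a * InverseSemigroup.star b)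
          * InverseSemigroup.star
              (a * (σ * (InverseSemigroup.star σ * InverseSemigroup.star a)))
          * (a * (σ * (InverseSemigroup.star σ * InverseSemigroup.star a))) := by
      rw [star_idem hdd, hwd, hdd]
    have hww := hLE g hgg (a * InverseSemigroup.star b)
      (a * (σ * (InverseSemigroup.star σ * InverseSemigroup.star a))) hwg hdg hdd hle2
    have hp : b * InverseSemigroup.star a = a * InverseSemigroup.star b := by
      have h1 := star_idem hww
      rwa [InverseSemigroup.star_mul, InverseSemigroup.star_star] at h1
    have hab : a * InverseSemigroup.star b * b = a := by
      rw [mul_assoc, hbb, ← haa, ← mul_assoc, mul_star_mul]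
    have hba : a * InverseSemigroup.star b * a = b := by
      rw [← hp, mul_assoc, haa, ← hbb, ← mul_assoc, mul_star_mul]
    calc a = a * InverseSemigroup.star b * b := hab.symm
      _ = a * InverseSemigroup.star b * (a * InverseSemigroup.star b * a) := by rw [hba]
      _ = a * InverseSemigroup.star b * (a * InverseSemigroup.star b) * a :=
        (mul_assoc _ _ _).symm
      _ = a * InverseSemigroup.star b * a := by rw [hww]
      _ = b := hba
  · -- every morphism epi ⇒ locally E-unitary
    intro hEpi e he s d hs hd hdd hle
    have hds : InverseSemigroup.star d = d := star_idem hdd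
    have hsd : s * d = d := by
      have h1 : d = s * d := by
        calc d = s * InverseSemigroup.star d * d := hle
          _ = s * (d * d) := by rw [hds, mul_assoc]
          _ = s * d := by rw [hdd]
      exact h1.symm
    have hdst : d * InverseSemigroup.star s = d := by
      have h1 := congrArg InverseSemigroup.star hsd
      rwa [InverseSemigroup.star_mul, hds] at h1
    have hqq : (InverseSemigroup.star s * s) * (InverseSemigroup.star s * s)
        = InverseSemigroup.star s * s := star_mul_self_idem s
    have h1 : d * (InverseSemigroup.star s * s) * d = d := by
      rw [← mul_assoc, hdst, mul_assoc, hsd, hdd]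
    have hcomm : d * (InverseSemigroup.star s * s) = (InverseSemigroup.star s * s) * d :=
      idem_comm hdd hqq
    have h2 : d * (InverseSemigroup.star s * s) * d = (InverseSemigroup.star s * s) * d := by
      rw [hcomm, mul_assoc, hdd]
    have hqd : (InverseSemigroup.star s * s) * d = d := by rw [← h2, h1]
    have hes : e * s = s := by
      have h3 : e * (e * s * e) = e * s * e := by
        rw [← mul_assoc, ← mul_assoc, he]
      rw [hs] at h3; exact h3
    have hsstar : e * InverseSemigroup.star s * e = InverseSemigroup.star s := by
      have h3 := congrArg InverseSemigroup.star hs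
      rwa [InverseSemigroup.star_mul, InverseSemigroup.star_mul, star_idem he,
        ← mul_assoc] at h3
    have hest : e * InverseSemigroup.star s = InverseSemigroup.star s := by
      have h3 : e * (e * InverseSemigroup.star s * e) = e * InverseSemigroup.star s * e := by
        rw [← mul_assoc, ← mul_assoc, he]
      rw [hsstar] at h3; exact h3
    have heq : e * (InverseSemigroup.star s * s) = InverseSemigroup.star s * s := by
      rw [← mul_assoc, hest]
    let D : LCat S := ⟨d, hdd⟩
    let Q : LCat S := ⟨InverseSemigroup.star s * s, hqq⟩
    let E : LCat S := ⟨e, he⟩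
    let φ : D ⟶ Q := ⟨d, hqd, by rw [hds, hdd]⟩
    let α : Q ⟶ E := ⟨s, hes, rfl⟩
    let β : Q ⟶ E := ⟨InverseSemigroup.star s * s, heq, by rw [star_idem hqq, hqq]⟩
    have hcomp : φ ≫ α = φ ≫ β := by
      apply Subtype.ext
      show s * d = (InverseSemigroup.star s * s) * d
      rw [hsd, hqd]
    have hαβ := (hEpi D Q φ).left_cancellation α β hcomp
    have hsq : s = InverseSemigroup.star s * s := congrArg Subtype.val hαβ
    have h4 : s * s = (InverseSemigroup.star s * s) * (InverseSemigroup.star s * s) := by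
      rw [← hsq]
    rw [h4, hqq]
    exact hsq.symm
end

section
/- Let S and T be inverse semigroups such that the presheaf categories PSh(L(S)) and PSh(L(T)) are equivalent (i.e. S and T are Morita equivalent). If S is locally E-unitary, then T is locally E-unitary. -/
universe u

open CategoryTheory

open InverseSemigroup

namespace MoritaAux

open CategoryTheory CategoryTheory.Limits Opposite InverseSemigroup

/-- If `S` is locally E-unitary, then every morphism of `L(S)` is an epimorphism. -/
theorem leu_allEpi {S : Type u} [InverseSemigroup S] (hS : LocallyEUnitary S)
    {d f e : LCat S} (t : d ⟶ f) (α β : f ⟶ e) (hcomp : t ≫ α = t ≫ β) : α = β := by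
  obtain ⟨v, hFv, hvv⟩ := t
  obtain ⟨s, hEs, hss⟩ := α
  obtain ⟨u, hEu, huu⟩ := β
  have heq : s * v = u * v := congrArg Subtype.val hcomp
  apply Subtype.ext
  show s = u
  have hF : f.1 * f.1 = f.1 := f.2
  have hE : e.1 * e.1 = e.1 := e.2
  -- basic identities
  have hsF : s * f.1 = s := by rw [← hss, ← mul_assoc, mul_star_mul]
  have huF : u * f.1 = u := by rw [← huu, ← mul_assoc, mul_star_mul]
  have hFu' : f.1 * star u = star u := by
    have h1 := congrArg InverseSemigroup.star huF
    rwa [InverseSemigroup.star_mul, star_idem hF] at h1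
  have hEstar_u : star u * e.1 = star u := by
    have h1 := congrArg InverseSemigroup.star hEu
    rwa [InverseSemigroup.star_mul, star_idem hE] at h1
  -- first application of local E-unitarity, at the idempotent `f.1`
  have hd0 : (v * star v) * (v * star v) = v * star v := mul_star_self_idem v
  have hsd0 : star (v * star v) = v * star v := star_idem hd0
  have hFd0 : f.1 * (v * star v) = v * star v := by rw [← mul_assoc, hFv]
  have hd0F : (v * star v) * f.1 = v * star v := by
    have h1 := congrArg InverseSemigroup.star hFd0
    rw [InverseSemigroup.star_mul, star_idem hF, hsd0] at h1
    exact h1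
  have hx1 : f.1 * (star u * s) = star u * s := by rw [← mul_assoc, hFu']
  have hx2 : (star u * s) * f.1 = star u * s := by rw [mul_assoc, hsF]
  have hxd0 : (star u * s) * (v * star v) = v * star v := by
    calc (star u * s) * (v * star v) = ((star u * s) * v) * star v := (mul_assoc _ _ _).symm
      _ = (star u * (s * v)) * star v := by rw [mul_assoc (star u) s v]
      _ = (star u * (u * v)) * star v := by rw [heq]
      _ = ((star u * u) * v) * star v := by rw [← mul_assoc (star u) u v]
      _ = (f.1 * v) * star v := by rw [huu]
      _ = v * star v := by rw [hFv]
  have hxx : (star u * s) * (star u * s) = star u * s := by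
    apply hS f.1 hF (star u * s) (v * star v)
    · rw [hx1, hx2]
    · rw [hFd0, hd0F]
    · exact hd0
    · rw [hsd0, mul_assoc (InverseSemigroup.star u * s), hd0, hxd0]
  -- second application, at the idempotent `e.1`
  have hd1 : ((u * v) * star (u * v)) * ((u * v) * star (u * v)) = (u * v) * star (u * v) :=
    mul_star_self_idem (u * v)
  have hsd1 : star ((u * v) * star (u * v)) = (u * v) * star (u * v) := star_idem hd1
  have hEuv : e.1 * (u * v) = u * v := by rw [← mul_assoc, hEu]
  have hEd1 : e.1 * ((u * v) * star (u * v)) = (u * v) * star (u * v) := by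
    rw [← mul_assoc, hEuv]
  have hd1E : ((u * v) * star (u * v)) * e.1 = (u * v) * star (u * v) := by
    have h1 := congrArg InverseSemigroup.star hEd1
    rw [InverseSemigroup.star_mul, star_idem hE, hsd1] at h1
    exact h1
  have hy1 : e.1 * (s * star u) = s * star u := by rw [← mul_assoc, hEs]
  have hy2 : (s * star u) * e.1 = s * star u := by rw [mul_assoc, hEstar_u]
  have hyd1 : (s * star u) * ((u * v) * star (u * v)) = (u * v) * star (u * v) := by
    calc (s * star u) * ((u * v) * star (u * v))
        = (s * star u) * (u * (v * star (u * v))) := by rw [mul_assoc u v]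
      _ = ((s * star u) * u) * (v * star (u * v)) := (mul_assoc _ _ _).symm
      _ = (s * (star u * u)) * (v * star (u * v)) := by rw [mul_assoc s]
      _ = (s * f.1) * (v * star (u * v)) := by rw [huu]
      _ = s * (v * star (u * v)) := by rw [hsF]
      _ = (s * v) * star (u * v) := (mul_assoc _ _ _).symm
      _ = (u * v) * star (u * v) := by rw [heq]
  have hyy : (s * star u) * (s * star u) = s * star u := by
    apply hS e.1 hE (s * star u) ((u * v) * star (u * v))
    · rw [hy1, hy2]
    · rw [hEd1, hd1E]
    · exact hd1
    · rw [hsd1, mul_assoc (s * InverseSemigroup.star u), hd1, hyd1]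
  -- conclude
  have h1 : star s * u = star u * s := by
    have h1 := star_idem hxx
    rwa [InverseSemigroup.star_mul, InverseSemigroup.star_star] at h1
  have h2 : u * star s = s * star u := by
    have h2 := star_idem hyy
    rwa [InverseSemigroup.star_mul, InverseSemigroup.star_star] at h2
  have hu_eq : u = s * (star u * s) := by
    calc u = u * f.1 := huF.symm
      _ = u * (star s * s) := by rw [hss]
      _ = (u * star s) * s := (mul_assoc _ _ _).symm
      _ = (s * star u) * s := by rw [h2]
      _ = s * (star u * s) := mul_assoc _ _ _
  calc s = s * f.1 := hsF.symm
    _ = s * (star u * u) := by rw [huu]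
    _ = (s * star u) * u := (mul_assoc _ _ _).symm
    _ = (u * star s) * u := by rw [← h2]
    _ = u * (star s * u) := mul_assoc _ _ _
    _ = u * (star u * s) := by rw [h1]
    _ = (s * (star u * s)) * (star u * s) := by rw [← hu_eq]
    _ = s * ((star u * s) * (star u * s)) := mul_assoc _ _ _
    _ = s * (star u * s) := by rw [hxx]
    _ = u := hu_eq.symm

/-- If every morphism of `L(T)` is an epimorphism, then `T` is locally E-unitary. -/
theorem allEpi_leu {T : Type u} [InverseSemigroup T]
    (hT : ∀ {d f e : LCat T} (t : d ⟶ f) (α β : f ⟶ e), t ≫ α = t ≫ β → α = β) :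
    LocallyEUnitary T := by
  intro e he s d hs hd hdd hle
  have hsd : star d = d := star_idem hdd
  rw [hsd, mul_assoc, hdd] at hle
  have hsd2 : s * d = d := hle.symm
  have hEs : e * s = s := by
    calc e * s = e * (e * s * e) := by rw [hs]
      _ = (e * (e * s)) * e := (mul_assoc _ _ _).symm
      _ = ((e * e) * s) * e := by rw [← mul_assoc e e s]
      _ = (e * s) * e := by rw [he]
      _ = s := hs
  have hsE : s * e = s := by
    calc s * e = (e * s * e) * e := by rw [hs]
      _ = (e * s) * (e * e) := mul_assoc _ _ _
      _ = (e * s) * e := by rw [he]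
      _ = s := hs
  have hFF : (star s * s) * (star s * s) = star s * s := star_mul_self_idem s
  have hestar : e * star s = star s := by
    have h1 := congrArg InverseSemigroup.star hsE
    rwa [InverseSemigroup.star_mul, star_idem he] at h1
  have hEF : e * (star s * s) = star s * s := by rw [← mul_assoc, hestar]
  have hds' : d * star s = d := by
    have h1 := congrArg InverseSemigroup.star hsd2
    rwa [InverseSemigroup.star_mul, hsd] at h1
  have hkey : d = d * (star s * s) * d := by
    calc d = d * d := hdd.symm
      _ = (d * star s) * (s * d) := by rw [hds', hsd2]
      _ = ((d * star s) * s) * d := (mul_assoc _ _ _).symm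
      _ = (d * (star s * s)) * d := by rw [mul_assoc d]
  have hcom : d * (star s * s) = (star s * s) * d := idem_comm hdd hFF
  have hdFq : d * (star s * s) = d := by
    calc d * (star s * s) = (d * d) * (star s * s) := by rw [hdd]
      _ = d * (d * (star s * s)) := mul_assoc _ _ _
      _ = d * ((star s * s) * d) := by rw [hcom]
      _ = (d * (star s * s)) * d := (mul_assoc _ _ _).symm
      _ = d := hkey.symm
  have hFqd : (star s * s) * d = d := by rw [← hcom, hdFq]
  -- build the categorical data
  let oE : LCat T := ⟨e, he⟩
  let oF : LCat T := ⟨star s * s, hFF⟩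
  let oD : LCat T := ⟨d, hdd⟩
  let t : oD ⟶ oF := ⟨d, hFqd, by rw [hsd]; exact hdd⟩
  let α : oF ⟶ oE := ⟨s, hEs, rfl⟩
  let β : oF ⟶ oE := ⟨star s * s, hEF, by rw [star_idem hFF]; exact hFF⟩
  have hcomp : t ≫ α = t ≫ β := Subtype.ext (show s * d = (star s * s) * d by rw [hsd2, hFqd])
  have hαβ := hT t α β hcomp
  have hval : s = star s * s := congrArg Subtype.val hαβ
  calc s * s = (star s * s) * (star s * s) := by rw [← hval]
    _ = star s * s := hFF
    _ = s := hval.symm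

/-- A map from a representable presheaf into a coproduct factors through one summand. -/
theorem factor_through_summand {D : Type u} [Category.{u} D] {J : Type u}
    (K : Discrete J ⥤ (Dᵒᵖ ⥤ Type u)) {f : D} (q : yoneda.obj f ⟶ colimit K) :
    ∃ (j : Discrete J) (w : yoneda.obj f ⟶ K.obj j), q = w ≫ colimit.ι K j := by
  obtain ⟨j, y, hy⟩ := Types.jointly_surjective (K ⋙ (evaluation Dᵒᵖ (Type u)).obj (op f))
    (isColimitOfPreserves ((evaluation Dᵒᵖ (Type u)).obj (op f)) (colimit.isColimit K))
    (yonedaEquiv q)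
  refine ⟨j, yonedaEquiv.symm y, yonedaEquiv.injective ?_⟩
  rw [yonedaEquiv_comp, Equiv.apply_symm_apply]
  exact hy.symm

/-- Representable presheaves are projective. -/
theorem projective_yoneda_obj {D : Type u} [Category.{u} D] (f : D) :
    Projective (yoneda.obj f : Dᵒᵖ ⥤ Type u) := by
  constructor
  intro X Y g e he
  have hepi : Epi (e.app (op f)) := (NatTrans.epi_iff_epi_app e).mp he (op f)
  obtain ⟨x, hx⟩ := (epi_iff_surjective (e.app (op f))).mp hepi (yonedaEquiv g)
  refine ⟨yonedaEquiv.symm x, yonedaEquiv.injective ?_⟩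
  rw [yonedaEquiv_comp, Equiv.apply_symm_apply, hx]

/-- Under an equivalence of presheaf categories, the image of a representable is a
retract of a representable. -/
theorem retract_of_representable {C D : Type u} [Category.{u} C] [Category.{u} D]
    (h : (Cᵒᵖ ⥤ Type u) ≌ (Dᵒᵖ ⥤ Type u)) (f : D) :
    ∃ (c : C) (r : h.inverse.obj (yoneda.obj f) ⟶ yoneda.obj c)
      (i : yoneda.obj c ⟶ h.inverse.obj (yoneda.obj f)),
      r ≫ i = 𝟙 (h.inverse.obj (yoneda.obj f)) := by
  haveI : Projective (yoneda.obj f : Dᵒᵖ ⥤ Type u) := projective_yoneda_obj f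
  haveI hPproj : Projective (h.inverse.obj (yoneda.obj f)) :=
    (h.symm.map_projective_iff (yoneda.obj f)).mpr inferInstance
  let P : Cᵒᵖ ⥤ Type u := h.inverse.obj (yoneda.obj f)
  let Jt : Type u := (c : C) × P.obj (op c)
  let fam : Jt → (Cᵒᵖ ⥤ Type u) := fun j => yoneda.obj j.1
  let ε : (∐ fam) ⟶ P := Sigma.desc (fun j => yonedaEquiv.symm j.2)
  haveI hepi : Epi ε := by
    refine ⟨fun {Z} a b hab => ?_⟩
    ext c x
    have h1 : Sigma.ι fam ⟨c.unop, x⟩ ≫ ε = yonedaEquiv.symm x := Sigma.ι_desc _ _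
    have h3 : (yonedaEquiv.symm x).app c (𝟙 c.unop)
        = (P.map (𝟙 c.unop).op x : P.obj c) := yonedaEquiv_symm_app_apply x c (𝟙 c.unop)
    have h3' : (yonedaEquiv.symm x).app c (𝟙 c.unop) = x := by
      rw [h3]; simp
    have h2 : ε.app c ((Sigma.ι fam ⟨c.unop, x⟩).app c (𝟙 c.unop)) = x := by
      have := congrArg (fun (m : yoneda.obj c.unop ⟶ P) => m.app c (𝟙 c.unop)) h1
      dsimp at this
      rw [this, h3']
    calc a.app c x = a.app c (ε.app c ((Sigma.ι fam ⟨c.unop, x⟩).app c (𝟙 c.unop))) := by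
          rw [h2]
      _ = b.app c (ε.app c ((Sigma.ι fam ⟨c.unop, x⟩).app c (𝟙 c.unop))) :=
          congrArg (fun (m : (∐ fam) ⟶ Z) => m.app c ((Sigma.ι fam ⟨c.unop, x⟩).app c (𝟙 c.unop))) hab
      _ = b.app c x := by rw [h2]
  let s : P ⟶ (∐ fam) := Projective.factorThru (𝟙 P) ε
  have hsε : s ≫ ε = 𝟙 P := Projective.factorThru_comp (𝟙 P) ε
  let adj := h.symm.toAdjunction
  haveI : PreservesColimitsOfSize.{u, u} h.functor :=
    h.toAdjunction.leftAdjoint_preservesColimits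
  let Kf : Discrete Jt ⥤ (Cᵒᵖ ⥤ Type u) := Discrete.functor fam
  obtain ⟨j, w, hw⟩ := factor_through_summand (Kf ⋙ h.functor)
    ((adj.homEquiv (yoneda.obj f) (∐ fam)) s ≫ (preservesColimitIso h.functor Kf).hom)
  have hshat : (adj.homEquiv (yoneda.obj f) (∐ fam)) s = w ≫ h.functor.map (colimit.ι Kf j) := by
    have h4 : (adj.homEquiv (yoneda.obj f) (∐ fam)) s
        = ((adj.homEquiv (yoneda.obj f) (∐ fam)) s ≫ (preservesColimitIso h.functor Kf).hom)
          ≫ (preservesColimitIso h.functor Kf).inv := by simp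
    rw [hw, Category.assoc, ι_preservesColimitIso_inv] at h4
    exact h4
  have hs_fact : s = ((adj.homEquiv (yoneda.obj f) (Kf.obj j)).symm w) ≫ colimit.ι Kf j := by
    have h5 : s = (adj.homEquiv (yoneda.obj f) (∐ fam)).symm
        ((adj.homEquiv (yoneda.obj f) (∐ fam)) s) := (Equiv.symm_apply_apply _ _).symm
    rw [hshat] at h5
    exact h5.trans (adj.homEquiv_naturality_right_symm w (colimit.ι Kf j))
  refine ⟨j.as.1, (adj.homEquiv (yoneda.obj f) (Kf.obj j)).symm w, colimit.ι Kf j ≫ ε, ?_⟩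
  rw [← Category.assoc, ← hs_fact]
  exact hsε

/-- The image of a representable under the inverse equivalence has an element somewhere. -/
theorem exists_element {C D : Type u} [Category.{u} C] [Category.{u} D]
    (h : (Cᵒᵖ ⥤ Type u) ≌ (Dᵒᵖ ⥤ Type u)) (d : D) :
    ∃ c : C, Nonempty ((h.inverse.obj (yoneda.obj d)).obj (op c)) := by
  by_contra hcon
  push_neg at hcon
  have hempty : ∀ c : Cᵒᵖ, IsEmpty ((h.inverse.obj (yoneda.obj d)).obj c) := fun c =>
    hcon c.unop
  let W : Dᵒᵖ ⥤ Type u := (Functor.const Dᵒᵖ).obj (ULift Bool)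
  let u₁ : yoneda.obj d ⟶ W := yonedaEquiv.symm ⟨true⟩
  let u₂ : yoneda.obj d ⟶ W := yonedaEquiv.symm ⟨false⟩
  have hGmap : h.inverse.map u₁ = h.inverse.map u₂ := by
    ext c x
    exact ((hempty c).false x).elim
  have hu : u₁ = u₂ := h.inverse.map_injective hGmap
  have hud := congrArg yonedaEquiv hu
  simp only [u₁, u₂, Equiv.apply_symm_apply] at hud
  exact Bool.noConfusion (congrArg ULift.down hud)

/-- Transfer of the "all morphisms are epimorphisms" property across an equivalence
of presheaf categories. -/
theorem allEpi_transfer {C D : Type u} [Category.{u} C] [Category.{u} D]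
    (h : (Cᵒᵖ ⥤ Type u) ≌ (Dᵒᵖ ⥤ Type u))
    (hC : ∀ {a b c : C} (t : a ⟶ b) (α β : b ⟶ c), t ≫ α = t ≫ β → α = β)
    {a b c : D} (t : a ⟶ b) (α β : b ⟶ c) (hco : t ≫ α = t ≫ β) : α = β := by
  obtain ⟨cp, rp, ip, hp⟩ := retract_of_representable h b
  obtain ⟨cq, rq, iq, hq⟩ := retract_of_representable h c
  obtain ⟨c', ⟨x⟩⟩ := exists_element h a
  have hτ : h.inverse.map (yoneda.map t) ≫ h.inverse.map (yoneda.map α)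
      = h.inverse.map (yoneda.map t) ≫ h.inverse.map (yoneda.map β) := by
    rw [← h.inverse.map_comp, ← h.inverse.map_comp, ← yoneda.map_comp, ← yoneda.map_comp, hco]
  have hkey : (yonedaEquiv.symm x ≫ h.inverse.map (yoneda.map t) ≫ rp)
        ≫ (ip ≫ h.inverse.map (yoneda.map α) ≫ rq)
      = (yonedaEquiv.symm x ≫ h.inverse.map (yoneda.map t) ≫ rp)
        ≫ (ip ≫ h.inverse.map (yoneda.map β) ≫ rq) := by
    simp only [Category.assoc, reassoc_of% hp, reassoc_of% hτ]
  have h6 : yoneda.preimage (yonedaEquiv.symm x ≫ h.inverse.map (yoneda.map t) ≫ rp)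
        ≫ yoneda.preimage (ip ≫ h.inverse.map (yoneda.map α) ≫ rq)
      = yoneda.preimage (yonedaEquiv.symm x ≫ h.inverse.map (yoneda.map t) ≫ rp)
        ≫ yoneda.preimage (ip ≫ h.inverse.map (yoneda.map β) ≫ rq) := by
    apply yoneda.map_injective
    rw [yoneda.map_comp, yoneda.map_comp, Functor.map_preimage, Functor.map_preimage,
      Functor.map_preimage, hkey]
  have h7 := hC _ _ _ h6
  have hAB : ip ≫ h.inverse.map (yoneda.map α) ≫ rq = ip ≫ h.inverse.map (yoneda.map β) ≫ rq := by
    rw [← Functor.map_preimage yoneda (ip ≫ h.inverse.map (yoneda.map α) ≫ rq),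
      ← Functor.map_preimage yoneda (ip ≫ h.inverse.map (yoneda.map β) ≫ rq), h7]
  have hφψ : h.inverse.map (yoneda.map α) = h.inverse.map (yoneda.map β) := by
    have e1 : h.inverse.map (yoneda.map α)
        = rp ≫ (ip ≫ h.inverse.map (yoneda.map α) ≫ rq) ≫ iq := by
      simp only [Category.assoc, reassoc_of% hp]
      rw [hq, Category.comp_id]
    have e2 : h.inverse.map (yoneda.map β)
        = rp ≫ (ip ≫ h.inverse.map (yoneda.map β) ≫ rq) ≫ iq := by
      simp only [Category.assoc, reassoc_of% hp]
      rw [hq, Category.comp_id]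
    rw [e1, hAB, ← e2]
  exact yoneda.map_injective (h.inverse.map_injective hφψ)

end MoritaAux

/-- Being locally E-unitary is a Morita invariant of inverse semigroups: if the
classifying toposes `PSh(L(S))` and `PSh(L(T))` are equivalent and `S` is locally
E-unitary, then so is `T`. -/
theorem locallyEUnitary_of_morita_equivalent
    (S T : Type u) [InverseSemigroup S] [InverseSemigroup T]
    (h : Nonempty (((LCat S)ᵒᵖ ⥤ Type u) ≌ ((LCat T)ᵒᵖ ⥤ Type u)))
    (hS : LocallyEUnitary S) : LocallyEUnitary T := by
  obtain ⟨h⟩ := h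
  exact MoritaAux.allEpi_leu (fun {d f e} t α β hh =>
    MoritaAux.allEpi_transfer h
      (fun {a b c} t' α' β' hh' => MoritaAux.leu_allEpi hS t' α' β' hh') t α β hh)
end

section
/- Let S be an inverse semigroup. Then: (1) for every idempotent e of S, the right S-set eS is unitary; (2) a unitary right S-set is indecomposable and projective if and only if it is isomorphic to eS for some idempotent e; (3) the functor F from C(S) to the category of unitary right S-sets, sending an idempotent e to eS and a morphism (f,a,e) to the map eS → fS, x ↦ ax, is fully faithful. -/
universe u

open CategoryTheory

open InverseSemigroup

/-- An object is indecomposable if its covariant hom-functor preserves coproducts. -/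
def Indecomposable {C : Type*} [Category.{u} C] (P : C) : Prop :=
  ∀ J : Type u,
    Nonempty (Limits.PreservesColimitsOfShape (Discrete J) (coyoneda.obj (Opposite.op P)))

variable {S : Type u} [InverseSemigroup S]

/-- The right `S`-set `eS`, for an idempotent `e`. -/
def principalRSet (e : {e : S // e * e = e}) : RSet S where
  carrier := {s : S // e.1 * s = s}
  act x s := ⟨x.1 * s, by rw [← mul_assoc, x.2]⟩
  act_mul x s t := Subtype.ext (mul_assoc x.1 s t)

theorem principalRSet_unitary (e : {e : S // e * e = e}) : (principalRSet e).Unitary :=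
  fun x => ⟨x, star x.1 * x.1, Subtype.ext (by
    show x.1 * (star x.1 * x.1) = x.1
    rw [← mul_assoc, mul_star_mul])⟩

/-- The unitary right `S`-set `eS`, for an idempotent `e`. -/
def principalUSet (e : {e : S // e * e = e}) : USet S :=
  ⟨principalRSet e, principalRSet_unitary e⟩

/-- The functor `F : C(S) → S-Set`, `e ↦ eS`, `(f,a,e) ↦ (x ↦ ax)`. -/
def FFunctor (S : Type u) [InverseSemigroup S] : CauchyCat S ⥤ USet S where
  obj e := principalUSet e
  map {e f} u :=
    { toFun := fun x => ⟨u.1 * x.1, by rw [← mul_assoc, idem_left_absorb f.2 u.2]⟩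
      map_act := fun x s => Subtype.ext (mul_assoc u.1 x.1 s).symm }
  map_id e := by
    apply RSet.Hom.ext
    funext x
    exact Subtype.ext x.2
  map_comp {e f g} u v := by
    apply RSet.Hom.ext
    funext x
    exact Subtype.ext (mul_assoc v.1 u.1 x.1)

namespace ProofAux

open CategoryTheory Limits

variable {S : Type u} [InverseSemigroup S]

/-- Abbreviation for the type of idempotents. -/
abbrev Idem (S : Type u) [Semigroup S] := {e : S // e * e = e}

/-- The canonical element `e ∈ eS`. -/
def elt (e : Idem S) : (principalUSet (S := S) e).1.carrier := ⟨e.1, e.2⟩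

theorem hom_apply {e : Idem S} {Y : USet S} (h : principalUSet (S := S) e ⟶ Y)
    (x : (principalUSet (S := S) e).1.carrier) :
    h.toFun x = Y.1.act (h.toFun (elt e)) x.1 := by
  have hx : (principalUSet (S := S) e).1.act (elt e) x.1 = x := Subtype.ext x.2
  calc h.toFun x = h.toFun ((principalUSet (S := S) e).1.act (elt e) x.1) := by rw [hx]
    _ = Y.1.act (h.toFun (elt e)) x.1 := h.map_act _ _

theorem hom_fix {e : Idem S} {Y : USet S} (h : principalUSet (S := S) e ⟶ Y) :
    Y.1.act (h.toFun (elt e)) e.1 = h.toFun (elt e) :=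
  (hom_apply h (elt e)).symm

/-- The hom `eS ⟶ Y` determined by a fixed point of `e` in `Y`. -/
def homOfFix {Y : USet S} (e : Idem S) (y : Y.1.carrier) (_ : Y.1.act y e.1 = y) :
    principalUSet (S := S) e ⟶ Y where
  toFun x := Y.1.act y x.1
  map_act x s := (Y.1.act_mul y x.1 s).symm

theorem homOfFix_elt {Y : USet S} (e : Idem S) (y : Y.1.carrier) (hy : Y.1.act y e.1 = y) :
    (homOfFix e y hy).toFun (elt e) = y := hy

theorem hom_ext_elt {e : Idem S} {Y : USet S} {h h' : principalUSet (S := S) e ⟶ Y}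
    (H : h.toFun (elt e) = h'.toFun (elt e)) : h = h' := by
  apply RSet.Hom.ext; funext x; rw [hom_apply h, hom_apply h', H]

theorem epi_of_surjective {Y Z : USet S} (g : Y ⟶ Z)
    (hg : Function.Surjective g.toFun) : Epi g := by
  constructor
  intro W u v huv
  apply RSet.Hom.ext; funext z
  obtain ⟨y, rfl⟩ := hg z
  exact congrFun (congrArg RSet.Hom.toFun huv) y

/-- The relation used to glue two copies of `Z` along the image of `g`. -/
def dRel {Y Z : USet S} (g : Y ⟶ Z) (p q : Z.1.carrier × Bool) : Prop :=
  p.1 = q.1 ∧ ∃ y, g.toFun y = p.1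

/-- Two copies of `Z` glued along the image of `g`. -/
def doubling {Y Z : USet S} (g : Y ⟶ Z) : USet S :=
  ⟨{ carrier := Quot (dRel g)
     act := fun w s => Quot.lift (fun p => Quot.mk (dRel g) (Z.1.act p.1 s, p.2))
       (fun p q hpq => Quot.sound ⟨by rw [hpq.1], by
          obtain ⟨y, hy⟩ := hpq.2
          exact ⟨Y.1.act y s, by rw [g.map_act, hy]⟩⟩) w
     act_mul := fun w s t => by
       induction w using Quot.ind with
       | _ p => exact congrArg (Quot.mk (dRel g)) (Prod.ext (Z.1.act_mul p.1 s t) rfl) },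
   fun w => by
     induction w using Quot.ind with
     | _ p =>
     obtain ⟨z, s, hz⟩ := Z.2 p.1
     exact ⟨Quot.mk (dRel g) (z, p.2), s,
       congrArg (Quot.mk (dRel g)) (Prod.ext hz rfl)⟩⟩

/-- The two injections `Z ⟶ doubling g`. -/
def dInj {Y Z : USet S} (g : Y ⟶ Z) (b : Bool) : Z ⟶ doubling g :=
  ⟨fun z => Quot.mk (dRel g) (z, b), fun _ _ => rfl⟩

theorem surjective_of_epi {Y Z : USet S} (g : Y ⟶ Z) (hg : Epi g) :
    Function.Surjective g.toFun := by
  intro z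
  have hcomp : g ≫ dInj g true = g ≫ dInj g false := by
    apply RSet.Hom.ext; funext y
    exact Quot.sound ⟨rfl, y, rfl⟩
  have heq : dInj g true = dInj g false := hg.left_cancellation _ _ hcomp
  have key : Quot.mk (dRel g) (z, true) = Quot.mk (dRel g) (z, false) :=
    congrFun (congrArg RSet.Hom.toFun heq) z
  have hinv : ∀ p q : Z.1.carrier × Bool, dRel g p q →
      (p.2 = false → ∃ y, g.toFun y = p.1) = (q.2 = false → ∃ y, g.toFun y = q.1) := by
    intro p q hpq
    obtain ⟨y, hy⟩ := hpq.2
    exact propext ⟨fun _ _ => ⟨y, hy.trans hpq.1⟩, fun _ _ => ⟨y, hy⟩⟩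
  have h2 := congrArg (Quot.lift _ hinv) key
  exact (Eq.mp h2 (fun h => Bool.noConfusion h)) rfl

theorem projective_principal (e : Idem S) : Projective (principalUSet (S := S) e) := by
  refine ⟨?_⟩
  intro E Xc f g hg
  obtain ⟨w, hw⟩ := surjective_of_epi g hg (f.toFun (elt e))
  refine ⟨homOfFix e (E.1.act w e.1) (by rw [E.1.act_mul, e.2]), ?_⟩
  apply hom_ext_elt
  show g.toFun (E.1.act (E.1.act w e.1) e.1) = f.toFun (elt e)
  rw [E.1.act_mul, e.2, g.map_act, hw]
  rw [show Xc.1.act (f.toFun (elt e)) e.1 = f.toFun (elt e) from hom_fix f]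

/-- The disjoint union of a family of unitary `S`-sets. -/
def sigmaUSet {J : Type u} (F : J → USet S) : USet S :=
  ⟨{ carrier := Σ j, (F j).1.carrier
     act := fun p s => ⟨p.1, (F p.1).1.act p.2 s⟩
     act_mul := fun p s t => congrArg (Sigma.mk p.1) ((F p.1).1.act_mul p.2 s t) },
   fun p => by
     obtain ⟨y, s, hy⟩ := (F p.1).2 p.2
     exact ⟨⟨p.1, y⟩, s, congrArg (Sigma.mk p.1) hy⟩⟩

/-- The injections into the disjoint union. -/
def sigmaInj {J : Type u} (F : J → USet S) (j : J) : F j ⟶ sigmaUSet F :=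
  ⟨fun x => ⟨j, x⟩, fun _ _ => rfl⟩

/-- The coproduct cocone on a discrete diagram of unitary `S`-sets. -/
def sigmaCocone {J : Type u} (K : Discrete J ⥤ USet S) : Cocone K where
  pt := sigmaUSet (fun j => K.obj ⟨j⟩)
  ι := Discrete.natTrans (fun j => sigmaInj (fun j => K.obj ⟨j⟩) j.as)

/-- The disjoint union cocone is a colimit. -/
def sigmaIsColimit {J : Type u} (K : Discrete J ⥤ USet S) : IsColimit (sigmaCocone K) where
  desc s := ⟨fun p => (s.ι.app ⟨p.1⟩).toFun p.2,
    fun p t => (s.ι.app ⟨p.1⟩).map_act p.2 t⟩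
  fac s j := by apply RSet.Hom.ext; funext x; rfl
  uniq s m hm := by
    apply RSet.Hom.ext; funext p
    exact congrFun (congrArg RSet.Hom.toFun (hm ⟨p.1⟩)) p.2

theorem sigma_snd_eq {J : Type u} {C : J → Type u} {j : J} {a b : C j}
    (h : (⟨j, a⟩ : Σ j, C j) = ⟨j, b⟩) : a = b := by
  injection h with h1 h2

section Factor

variable {J : Type u} {F : J → USet S} {e : Idem S}

/-- Index component of a hom into a disjoint union. -/
def j₀ (h : principalUSet (S := S) e ⟶ sigmaUSet F) : J := (h.toFun (elt e)).1

/-- Value component of a hom into a disjoint union. -/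
def y₀ (h : principalUSet (S := S) e ⟶ sigmaUSet F) : (F (j₀ h)).1.carrier :=
  (h.toFun (elt e)).2

theorem fix₀ (h : principalUSet (S := S) e ⟶ sigmaUSet F) :
    (F (j₀ h)).1.act (y₀ h) e.1 = y₀ h :=
  sigma_snd_eq (hom_fix h)

theorem factor₀ (h : principalUSet (S := S) e ⟶ sigmaUSet F) :
    h = homOfFix e (y₀ h) (fix₀ h) ≫ sigmaInj F (j₀ h) :=
  hom_ext_elt ((congrArg (Sigma.mk (j₀ h)) (fix₀ h)).symm)

end Factor

/-- The covariant hom functor of `eS` sends the disjoint union cocone to a colimit. -/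
def mappedIsColimit (e : Idem S) {J : Type u} (K : Discrete J ⥤ USet S) :
    IsColimit ((coyoneda.obj (Opposite.op (principalUSet (S := S) e))).mapCocone
      (sigmaCocone K)) where
  desc s := TypeCat.ofHom (fun (h : principalUSet (S := S) e ⟶ sigmaUSet (fun j => K.obj ⟨j⟩)) =>
    s.ι.app ⟨j₀ h⟩ (homOfFix e (y₀ h) (fix₀ h)))
  fac s j := by
    apply ConcreteCategory.hom_ext; intro t
    exact congrArg (s.ι.app j) (hom_ext_elt (hom_fix t))
  uniq s m hm := by
    apply ConcreteCategory.hom_ext; intro h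
    conv_lhs => rw [factor₀ h]
    exact types_congr_hom (hm ⟨j₀ h⟩) (homOfFix e (y₀ h) (fix₀ h))

theorem indecomposable_principal (e : Idem S) :
    Indecomposable (principalUSet (S := S) e) := fun _J =>
  ⟨⟨fun {K} =>
    preservesColimit_of_preserves_colimit_cocone (sigmaIsColimit K) (mappedIsColimit e K)⟩⟩

theorem indec_of_iso {X Y : USet S} (i : X ≅ Y) (h : Indecomposable X) :
    Indecomposable Y := by
  intro J
  obtain ⟨hP⟩ := h J
  exact ⟨preservesColimitsOfShape_of_natIso (F := coyoneda.obj (Opposite.op X))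
    (coyoneda.mapIso (Iso.op i)).symm⟩

theorem retract_iso_principal (X : USet S) (f : Idem S)
    (k : X ⟶ principalUSet (S := S) f) (m : principalUSet (S := S) f ⟶ X)
    (hkm : k ≫ m = 𝟙 X) :
    ∃ e : Idem S, Nonempty (X ≅ principalUSet (S := S) e) := by
  set a : S := ((m ≫ k).toFun (elt f)).1 with ha
  have hmem : f.1 * a = a := ((m ≫ k).toFun (elt f)).2
  have haf : a * f.1 = a := congrArg Subtype.val (hom_fix (m ≫ k))
  have happ : ∀ w : (principalUSet (S := S) f).1.carrier,
      (k.toFun (m.toFun w)).1 = a * w.1 :=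
    fun w => congrArg Subtype.val (hom_apply (m ≫ k) w)
  have hret : ∀ w : X.1.carrier, m.toFun (k.toFun w) = w :=
    fun w => congrFun (congrArg RSet.Hom.toFun hkm) w
  have hnd : (m ≫ k) ≫ (m ≫ k) = m ≫ k := by
    rw [Category.assoc, ← Category.assoc k m, hkm, Category.id_comp]
  have haa : a * a = a := by
    have h1 : (k.toFun (m.toFun ((m ≫ k).toFun (elt f)))).1 = a :=
      congrArg (fun (q : principalUSet (S := S) f ⟶ principalUSet (S := S) f) =>
        (RSet.Hom.toFun q (elt f)).1) hnd
    exact (happ ((m ≫ k).toFun (elt f))).symm.trans h1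
  refine ⟨⟨a, haa⟩, ?_⟩
  -- u : X ⟶ aS, v : aS ⟶ X
  let u : X ⟶ principalUSet (S := S) ⟨a, haa⟩ :=
    ⟨fun x => ⟨a * (k.toFun x).1, by rw [← mul_assoc, haa]⟩,
     fun x s => Subtype.ext (by
       show a * (k.toFun (X.1.act x s)).1 = a * (k.toFun x).1 * s
       rw [k.map_act x s]
       show a * ((k.toFun x).1 * s) = a * (k.toFun x).1 * s
       rw [mul_assoc])⟩
  let incl : principalUSet (S := S) ⟨a, haa⟩ ⟶ principalUSet (S := S) f :=
    ⟨fun z => ⟨z.1, by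
       have h1 : f.1 * (a * z.1) = a * z.1 := by rw [← mul_assoc, hmem]
       rwa [z.2] at h1⟩,
     fun z s => Subtype.ext rfl⟩
  let v : principalUSet (S := S) ⟨a, haa⟩ ⟶ X := incl ≫ m
  refine ⟨⟨u, v, ?_, ?_⟩⟩
  · apply RSet.Hom.ext; funext x
    show m.toFun (incl.toFun (u.toFun x)) = x
    have h1 : incl.toFun (u.toFun x) = k.toFun (m.toFun (k.toFun x)) :=
      Subtype.ext (happ (k.toFun x)).symm
    rw [h1, hret, hret]
  · apply RSet.Hom.ext; funext z
    apply Subtype.ext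
    show a * (k.toFun (m.toFun (incl.toFun z))).1 = z.1
    rw [happ (incl.toFun z)]
    show a * (a * z.1) = z.1
    rw [← mul_assoc, haa, z.2]

theorem iso_principal_of_indec_proj (X : USet S) (hInd : Indecomposable X)
    (hProj : Projective X) :
    ∃ e : Idem S, Nonempty (X ≅ principalUSet (S := S) e) := by
  classical
  -- every point is fixed by some idempotent
  have hfix : ∀ x : X.1.carrier, ∃ e : Idem S, X.1.act x e.1 = x := by
    intro x
    obtain ⟨y, s, hy⟩ := X.2 x
    refine ⟨⟨star s * s, star_mul_self_idem s⟩, ?_⟩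
    rw [← hy, X.1.act_mul]
    congr 1
    rw [← mul_assoc, mul_star_mul]
  choose fx hfx using hfix
  set F : X.1.carrier → USet S := fun x => principalUSet (fx x) with hF
  -- the canonical epi from the disjoint union of principal S-sets
  let π : sigmaUSet F ⟶ X :=
    ⟨fun p => X.1.act p.1 p.2.1, fun p t => (X.1.act_mul p.1 p.2.1 t).symm⟩
  have hπ : Function.Surjective π.toFun := fun x => ⟨⟨x, ⟨(fx x).1, (fx x).2⟩⟩, hfx x⟩
  have hEpi : Epi π := epi_of_surjective π hπ
  -- lift the identity through π by projectivity
  haveI := hEpi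
  obtain ⟨h, hh⟩ := hProj.factors (𝟙 X) π
  -- factor h through a single summand by indecomposability
  obtain ⟨hP⟩ := hInd X.1.carrier
  haveI := hP
  let K := Discrete.functor F
  have hc : IsColimit ((coyoneda.obj (Opposite.op X)).mapCocone (sigmaCocone K)) :=
    isColimitOfPreserves _ (sigmaIsColimit K)
  obtain ⟨j, t, ht⟩ := Types.jointly_surjective _ hc
    (show X ⟶ (sigmaCocone K).pt from h)
  -- now X is a retract of a principal S-set
  set f : Idem S := fx j.as with hf
  have hkm : t ≫ ((sigmaInj F j.as : F j.as ⟶ sigmaUSet F) ≫ π) = 𝟙 X := by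
    rw [← Category.assoc]
    rw [show (t ≫ (sigmaInj F j.as : F j.as ⟶ sigmaUSet F)) = h from ht]
    exact hh
  exact retract_iso_principal X f t (sigmaInj F j.as ≫ π) hkm

end ProofAux

/-- For an inverse semigroup `S`: (1) each `eS` is a unitary right `S`-set;
(2) a unitary right `S`-set is indecomposable and projective iff it is isomorphic
to some `eS`; (3) the functor `F : C(S) → S-Set`, `e ↦ eS`, is fully faithful. -/
theorem principal_usets_and_FFunctor
    (S : Type u) [InverseSemigroup S] :
    (∀ e : {e : S // e * e = e}, (principalRSet e).Unitary) ∧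
    (∀ X : USet S,
      (Indecomposable X ∧ Projective X) ↔
        ∃ e : {e : S // e * e = e}, Nonempty (X ≅ principalUSet e)) ∧
    ((FFunctor S).Full ∧ (FFunctor S).Faithful) := by
  refine ⟨principalRSet_unitary, fun X => ⟨fun hXP => ?_, ?_⟩, ⟨?_⟩, ⟨?_⟩⟩
  · exact ProofAux.iso_principal_of_indec_proj X hXP.1 hXP.2
  · rintro ⟨e, ⟨i⟩⟩
    exact ⟨ProofAux.indec_of_iso i.symm (ProofAux.indecomposable_principal e),
      Projective.of_iso i.symm (ProofAux.projective_principal e)⟩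
  · -- fullness
    intro e f φ
    have hmem : f.1 * (φ.toFun (ProofAux.elt e)).1 = (φ.toFun (ProofAux.elt e)).1 :=
      (φ.toFun (ProofAux.elt e)).2
    have haf : (φ.toFun (ProofAux.elt e)).1 * e.1 = (φ.toFun (ProofAux.elt e)).1 :=
      congrArg Subtype.val (ProofAux.hom_fix φ)
    refine ⟨⟨(φ.toFun (ProofAux.elt e)).1, by rw [mul_assoc, ← mul_assoc, hmem, haf]⟩, ?_⟩
    apply ProofAux.hom_ext_elt
    exact Subtype.ext haf
  · -- faithfulness
    intro e f u v huv
    apply Subtype.ext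
    have h1 := congrArg (fun (q : principalUSet e ⟶ principalUSet f) =>
      (RSet.Hom.toFun q (ProofAux.elt e)).1) huv
    have hu : u.1 * e.1 = u.1 := idem_right_absorb e.2 u.2
    have hv : v.1 * e.1 = v.1 := idem_right_absorb e.2 v.2
    calc u.1 = u.1 * e.1 := hu.symm
      _ = v.1 * e.1 := h1
      _ = v.1 := hv
end

section
/- Let S be an inverse semigroup. The forgetful functor U : Étale(S) → S-Set, (X,p) ↦ X, from étale right S-sets to unitary right S-sets has a right adjoint R given by R(X) = {(e,x) ∈ E(S) × X : xe = x}, with action (e,x)s = (s*es, xs) and projection (e,x) ↦ e; moreover U is comonadic. -/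
universe u

open CategoryTheory

open InverseSemigroup

namespace InverseSemigroup

variable {S : Type u} [InverseSemigroup S]

theorem conj_absorb {e : S} (he : e * e = e) (s : S) :
    s * (star s * e * s) = e * s := by
  have hc := idem_comm (mul_star_self_idem s) he
  have hc1 : ∀ y : S, s * (star s * (e * y)) = e * (s * (star s * y)) := fun y => by
    have h := congrArg (· * y) hc; simpa only [mul_assoc] using h
  have hs0 : s * (star s * s) = s := by simpa only [mul_assoc] using mul_star_mul s
  calc s * (star s * e * s) = s * (star s * (e * s)) := by simp only [mul_assoc]
    _ = e * (s * (star s * s)) := hc1 s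
    _ = e * s := by rw [hs0]

theorem conj_idem {e : S} (he : e * e = e) (s : S) :
    (star s * e * s) * (star s * e * s) = star s * e * s := by
  have h := congrArg (star s * ·) (congrArg (e * ·) (conj_absorb he s))
  simp only [mul_assoc] at h ⊢
  rw [h]
  have he1 : ∀ y : S, e * (e * y) = e * y := fun y => by rw [← mul_assoc, he]
  rw [he1]

end InverseSemigroup

/-- An étale right `S`-set: a right `S`-set with a projection `p` to the
idempotents such that `p(x • s) = s* p(x) s` and `x • p(x) = x`. -/
structure EtaleSet (S : Type u) [InverseSemigroup S] : Type (u + 1) where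
  carrier : Type u
  act : carrier → S → carrier
  act_mul : ∀ (x : carrier) (s t : S), act (act x s) t = act x (s * t)
  p : carrier → S
  p_idem : ∀ x, p x * p x = p x
  p_act : ∀ x s, p (act x s) = star s * p x * s
  act_p : ∀ x, act x (p x) = x

namespace EtaleSet

variable {S : Type u} [InverseSemigroup S]

/-- Morphisms of étale right `S`-sets: equivariant maps commuting with the
projections. -/
@[ext]
structure Hom (X Y : EtaleSet S) where
  toFun : X.carrier → Y.carrier
  map_act : ∀ (x : X.carrier) (s : S), toFun (X.act x s) = Y.act (toFun x) s
  map_p : ∀ x, Y.p (toFun x) = X.p x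

instance : Category.{u} (EtaleSet S) where
  Hom := Hom
  id X := ⟨fun x => x, fun _ _ => rfl, fun _ => rfl⟩
  comp f g := ⟨fun x => g.toFun (f.toFun x), fun x s => by
    simp [f.map_act, g.map_act], fun x => by simp [f.map_p, g.map_p]⟩

end EtaleSet

/-- The representable étale right `S`-set `eS`, with projection `s ↦ s* s`. -/
def etalePrincipal {S : Type u} [InverseSemigroup S] (e : {e : S // e * e = e}) :
    EtaleSet S where
  carrier := {s : S // e.1 * s = s}
  act x s := ⟨x.1 * s, by rw [← mul_assoc, x.2]⟩
  act_mul x s t := Subtype.ext (mul_assoc x.1 s t)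
  p x := star x.1 * x.1
  p_idem x := star_mul_self_idem x.1
  p_act x s := by
    show star (x.1 * s) * (x.1 * s) = star s * (star x.1 * x.1) * s
    rw [InverseSemigroup.star_mul]
    simp only [mul_assoc]
  act_p x := Subtype.ext (by
    show x.1 * (star x.1 * x.1) = x.1
    rw [← mul_assoc, mul_star_mul])

/-- The forgetful functor from étale right `S`-sets to unitary right `S`-sets. -/
def UFunctor (S : Type u) [InverseSemigroup S] : EtaleSet S ⥤ USet S where
  obj X := ⟨⟨X.carrier, X.act, X.act_mul⟩, fun x => ⟨x, X.p x, X.act_p x⟩⟩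
  map f := ⟨f.toFun, f.map_act⟩
  map_id X := rfl
  map_comp f g := rfl

/-- The right adjoint `R` of the forgetful functor:
`R(X) = {(e,x) ∈ E(S) × X : x • e = x}` with action `(e,x) • s = (s* e s, x • s)`
and projection `(e,x) ↦ e`. -/
def RFunctor (S : Type u) [InverseSemigroup S] : USet S ⥤ EtaleSet S where
  obj X :=
    { carrier := {q : S × X.1.carrier // q.1 * q.1 = q.1 ∧ X.1.act q.2 q.1 = q.2}
      act := fun q s => ⟨(star s * q.1.1 * s, X.1.act q.1.2 s), conj_idem q.2.1 s, by
        show X.1.act (X.1.act q.1.2 s) (star s * q.1.1 * s) = X.1.act q.1.2 s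
        rw [X.1.act_mul, conj_absorb q.2.1 s, ← X.1.act_mul, q.2.2]⟩
      act_mul := fun q s t => Subtype.ext (by
        apply Prod.ext
        · show star t * (star s * q.1.1 * s) * t = star (s * t) * q.1.1 * (s * t)
          rw [InverseSemigroup.star_mul]
          simp only [mul_assoc]
        · exact X.1.act_mul q.1.2 s t)
      p := fun q => q.1.1
      p_idem := fun q => q.2.1
      p_act := fun q s => rfl
      act_p := fun q => Subtype.ext (by
        apply Prod.ext
        · show star q.1.1 * q.1.1 * q.1.1 = q.1.1
          rw [star_idem q.2.1, q.2.1, q.2.1]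
        · exact q.2.2) }
  map {X Y} f :=
    { toFun := fun q => ⟨(q.1.1, f.toFun q.1.2), q.2.1, by rw [← f.map_act, q.2.2]⟩
      map_act := fun q s => Subtype.ext (Prod.ext rfl (f.map_act q.1.2 s))
      map_p := fun q => rfl }
  map_id X := by
    apply EtaleSet.Hom.ext
    funext q
    rfl
  map_comp f g := by
    apply EtaleSet.Hom.ext
    funext q
    rfl

section Comonadicity

variable (S : Type u) [InverseSemigroup S]

/-- The adjunction `U ⊣ R`. -/
def uAdj : UFunctor S ⊣ RFunctor S where
  unit :=
  { app := fun X =>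
      { toFun := fun x => ⟨(X.p x, x), X.p_idem x, X.act_p x⟩
        map_act := fun x s => Subtype.ext (Prod.ext (X.p_act x s) rfl)
        map_p := fun _ => rfl }
    naturality := fun X Y f => by
      apply EtaleSet.Hom.ext
      funext x
      exact Subtype.ext (Prod.ext (f.map_p x) rfl) }
  counit :=
  { app := fun X =>
      { toFun := fun q => q.1.2
        map_act := fun _ _ => rfl }
    naturality := fun X Y f => rfl }
  left_triangle_components := fun X => rfl
  right_triangle_components := fun Y => by
    apply EtaleSet.Hom.ext
    funext q
    exact Subtype.ext rfl

instance uFaithful : (UFunctor S).Faithful where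
  map_injective := fun {X Y} f g h => by
    apply EtaleSet.Hom.ext
    exact congrArg RSet.Hom.toFun h

instance comparisonFull : (Comonad.comparison (uAdj S)).Full where
  map_surjective := fun {X Y} f => by
    refine ⟨{ toFun := f.f.toFun, map_act := f.f.map_act, map_p := fun x => ?_ }, ?_⟩
    · have h := congrArg RSet.Hom.toFun f.h
      have h2 := congrFun h x
      have h3 := congrArg (fun q => q.1.1) h2
      exact h3.symm
    · apply Comonad.Coalgebra.Hom.ext
      apply RSet.Hom.ext
      rfl

/-- The étale set extracted from a coalgebra for the comonad of `uAdj`. -/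
def coalgToEtale (X : (uAdj S).toComonad.Coalgebra) : EtaleSet S where
  carrier := X.A.1.carrier
  act := X.A.1.act
  act_mul := X.A.1.act_mul
  p := fun x => (X.a.toFun x).1.1
  p_idem := fun x => (X.a.toFun x).2.1
  p_act := fun x s => congrArg (fun q => q.1.1) (X.a.map_act x s)
  act_p := fun x => by
    have hε : (X.a.toFun x).1.2 = x :=
      congrFun (congrArg RSet.Hom.toFun X.counit) x
    have h := (X.a.toFun x).2.2
    rw [hε] at h
    exact h

instance comparisonEssSurj : (Comonad.comparison (uAdj S)).EssSurj where
  mem_essImage X := by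
    refine ⟨coalgToEtale S X, ⟨Comonad.Coalgebra.isoMk (Iso.refl _) ?_⟩⟩
    apply RSet.Hom.ext
    funext x
    have hε : (X.a.toFun x).1.2 = x :=
      congrFun (congrArg RSet.Hom.toFun X.counit) x
    exact Subtype.ext (Prod.ext rfl hε.symm)

/-- The forgetful functor `U` from étale right `S`-sets to unitary right `S`-sets
has `R` as a right adjoint, and `U` is comonadic. -/
theorem uFunctor_adjunction_and_comonadic
    (S : Type u) [InverseSemigroup S] :
    Nonempty (UFunctor S ⊣ RFunctor S) ∧
      Nonempty (ComonadicLeftAdjoint (UFunctor S)) := by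
  refine ⟨⟨uAdj S⟩, ⟨⟨RFunctor S, uAdj S, ?_⟩⟩⟩
  exact
    { faithful := Comonad.comparison_faithful_of_faithful (uAdj S)
      full := comparisonFull S
      essSurj := comparisonEssSurj S }

end Comonadicity
end

section
/- Let S be an inverse semigroup. The functor R from the category of unitary right S-sets to Étale(S), sending X to the étale S-set {(e,x) ∈ E(S) × X : xe = x} with action (e,x)s = (s*es, xs) and projection (e,x) ↦ e, is monadic; consequently the category of unitary right S-sets is equivalent to the Eilenberg–Moore category of algebras for the monad R ∘ U on Étale(S), where U is the forgetful functor left adjoint to R. -/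
universe u

open CategoryTheory

open InverseSemigroup

/-- The adjunction `U ⊣ R`. -/
def adjUR (S : Type u) [InverseSemigroup S] : UFunctor S ⊣ RFunctor S :=
  CategoryTheory.Adjunction.mkOfUnitCounit
    { unit :=
        { app := fun Y =>
            { toFun := fun y => ⟨(Y.p y, y), Y.p_idem y, Y.act_p y⟩
              map_act := fun y s => Subtype.ext (Prod.ext (Y.p_act y s) rfl)
              map_p := fun y => rfl }
          naturality := fun Y Z f => by
            apply EtaleSet.Hom.ext
            funext y
            exact Subtype.ext (Prod.ext (f.map_p y) rfl) }
      counit :=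
        { app := fun X =>
            { toFun := fun q => q.1.2
              map_act := fun q s => rfl }
          naturality := fun X Z f => rfl }
      left_triangle := rfl
      right_triangle := rfl }

namespace MonadicAux

variable {S : Type u} [InverseSemigroup S]

theorem idem_conj {e f : S} (he : e * e = e) (hf : f * f = f) :
    star e * f * e = f * e := by
  rw [star_idem he, idem_comm he hf, mul_assoc, he]

section Algebras

variable (A : (adjUR S).toMonad.Algebra)

/-- Extension of `y` to the idempotent `e ≥ p y`, given by the algebra structure. -/
def ext (e : S) (y : A.A.carrier) (he : e * e = e) (hy : A.A.act y e = y) : A.A.carrier :=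
  A.a.toFun ⟨(e, y), he, hy⟩

theorem p_ext (e : S) (y : A.A.carrier) (he : e * e = e) (hy : A.A.act y e = y) :
    A.A.p (ext A e y he hy) = e :=
  A.a.map_p ⟨(e, y), he, hy⟩

theorem ext_congr2 {e e' : S} (hee : e = e') {y y' : A.A.carrier} (h : y = y')
    (he : e * e = e) (hy : A.A.act y e = y) (he' : e' * e' = e') (hy' : A.A.act y' e' = y') :
    ext A e y he hy = ext A e' y' he' hy' := by
  subst hee; subst h; rfl

theorem ext_p (y : A.A.carrier) (h1 : A.A.p y * A.A.p y = A.A.p y)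
    (h2 : A.A.act y (A.A.p y) = y) :
    ext A (A.A.p y) y h1 h2 = y :=
  congrFun (congrArg EtaleSet.Hom.toFun A.unit) y

theorem act_fix_conj {e : S} (y : A.A.carrier) (s : S) (he : e * e = e)
    (hy : A.A.act y e = y) :
    A.A.act (A.A.act y s) (star s * e * s) = A.A.act y s := by
  rw [A.A.act_mul, conj_absorb he s, ← A.A.act_mul, hy]

theorem ext_act (e : S) (y : A.A.carrier) (he : e * e = e) (hy : A.A.act y e = y) (s : S) :
    A.A.act (ext A e y he hy) s =
      ext A (star s * e * s) (A.A.act y s) (conj_idem he s) (act_fix_conj A y s he hy) :=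
  (A.a.map_act ⟨(e, y), he, hy⟩ s).symm

theorem ext_ext (e f : S) (y : A.A.carrier) (he : e * e = e) (hf : f * f = f)
    (hef : star e * f * e = f) (hyf : A.A.act y f = y) (hye : A.A.act y e = y)
    (hz : A.A.act (ext A f y hf hyf) e = ext A f y hf hyf) :
    ext A e (ext A f y hf hyf) he hz = ext A e y he hye :=
  (congrFun (congrArg EtaleSet.Hom.toFun A.assoc)
    ⟨(e, ⟨(f, y), hf, hyf⟩), he, Subtype.ext (Prod.ext hef hye)⟩).symm

/-- Restriction of `y` to `e` followed by extension back up to `e`. -/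
def rho (e : S) (he : e * e = e) (y : A.A.carrier) : A.A.carrier :=
  ext A e (A.A.act y e) he (by rw [A.A.act_mul, he])

theorem rho_gen (e : S) (he : e * e = e) (f : S) (hf : f * f = f)
    (z : A.A.carrier) (hzf : A.A.act z f = z) :
    rho A e he (ext A f z hf hzf) = rho A e he z := by
  have hfe : (f * e) * (f * e) = f * e := mul_idem hf he
  have hefe : e * (f * e) = f * e := by
    rw [← mul_assoc, idem_comm he hf, mul_assoc, he]
  have Pb : A.A.act (A.A.act z e) (f * e) = A.A.act z e := by
    rw [A.A.act_mul, hefe, ← A.A.act_mul, hzf]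
  have hze : A.A.act (A.A.act z e) e = A.A.act z e := by rw [A.A.act_mul, he]
  have hef' : star e * (f * e) * e = f * e := by
    rw [idem_conj he hfe, mul_assoc, he]
  have h1 : A.A.act (ext A f z hf hzf) e = ext A (f * e) (A.A.act z e) hfe Pb :=
    (ext_act A f z hf hzf e).trans (ext_congr2 A (idem_conj he hf) rfl _ _ _ _)
  have P2 : A.A.act (ext A (f * e) (A.A.act z e) hfe Pb) e
      = ext A (f * e) (A.A.act z e) hfe Pb :=
    (ext_act A (f * e) (A.A.act z e) hfe Pb e).trans
      (ext_congr2 A hef' (by rw [A.A.act_mul, he]) _ _ _ _)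
  calc rho A e he (ext A f z hf hzf)
      = ext A e (ext A (f * e) (A.A.act z e) hfe Pb) he P2 :=
        ext_congr2 A rfl h1 _ _ _ _
    _ = ext A e (A.A.act z e) he hze :=
        ext_ext A e (f * e) (A.A.act z e) he hfe hef' Pb hze P2
    _ = rho A e he z := rfl

/-- The generating relation for the quotient: `y` is an extension of `z`. -/
def genRel : A.A.carrier → A.A.carrier → Prop := fun y z =>
  ∃ (f : S) (hf : f * f = f) (hzf : A.A.act z f = z), y = ext A f z hf hzf

/-- The quotient right `S`-set of an algebra. -/
def quotRSet : RSet S where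
  carrier := Quot (genRel A)
  act ξ s :=
    Quot.lift (fun y => Quot.mk (genRel A) (A.A.act y s))
      (fun y z h => by
        obtain ⟨f, hf, hzf, rfl⟩ := h
        exact Quot.sound ⟨star s * f * s, conj_idem hf s, act_fix_conj A z s hf hzf,
          ext_act A f z hf hzf s⟩) ξ
  act_mul ξ s t :=
    Quot.inductionOn ξ fun y => congrArg (Quot.mk (genRel A)) (A.A.act_mul y s t)

/-- The quotient as a unitary right `S`-set. -/
def quotUSet : USet S :=
  ⟨quotRSet A, fun ξ =>
    Quot.inductionOn ξ fun y =>
      ⟨Quot.mk (genRel A) y, A.A.p y, congrArg (Quot.mk (genRel A)) (A.A.act_p y)⟩⟩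

/-- The comparison map from the algebra to `R` of the quotient. -/
def phi : EtaleSet.Hom A.A ((RFunctor S).obj (quotUSet A)) where
  toFun y := ⟨(A.A.p y, Quot.mk (genRel A) y), A.A.p_idem y,
    congrArg (Quot.mk (genRel A)) (A.A.act_p y)⟩
  map_act y s := Subtype.ext (Prod.ext (A.A.p_act y s) rfl)
  map_p y := rfl

/-- The inverse of `phi`. -/
def psi : EtaleSet.Hom ((RFunctor S).obj (quotUSet A)) A.A where
  toFun q :=
    Quot.lift (fun y => rho A q.1.1 q.2.1 y)
      (fun y z h => by
        obtain ⟨f, hf, hzf, rfl⟩ := h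
        exact rho_gen A q.1.1 q.2.1 f hf z hzf) q.1.2
  map_act := by
    rintro ⟨⟨e, ξ⟩, he, hfix⟩ s
    have he' : e * e = e := he
    induction ξ using Quot.ind with
    | _ y =>
      have hye : A.A.act (A.A.act y e) e = A.A.act y e := by rw [A.A.act_mul, he']
      show rho A (star s * e * s) (conj_idem he' s) (A.A.act y s)
        = A.A.act (rho A e he y) s
      refine Eq.trans ?_ (ext_act A e (A.A.act y e) he' hye s).symm
      exact ext_congr2 A rfl
        (by rw [A.A.act_mul, A.A.act_mul, conj_absorb he' s]) _ _ _ _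
  map_p := by
    rintro ⟨⟨e, ξ⟩, he, hfix⟩
    have he' : e * e = e := he
    induction ξ using Quot.ind with
    | _ y =>
      have hye : A.A.act (A.A.act y e) e = A.A.act y e := by rw [A.A.act_mul, he']
      show A.A.p (rho A e he y) = e
      exact p_ext A e (A.A.act y e) he' hye

theorem phi_psi_id : phi A ≫ psi A = 𝟙 A.A := by
  apply EtaleSet.Hom.ext
  funext y
  show rho A (A.A.p y) (A.A.p_idem y) y = y
  exact (ext_congr2 A rfl (A.A.act_p y) _ _ (A.A.p_idem y) (A.A.act_p y)).trans
    (ext_p A y _ _)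

theorem psi_phi_id : psi A ≫ phi A = 𝟙 ((RFunctor S).obj (quotUSet A)) := by
  apply EtaleSet.Hom.ext
  funext q
  obtain ⟨⟨e, ξ⟩, he, hfix⟩ := q
  induction ξ using Quot.ind with
  | _ y =>
    have he' : e * e = e := he
    have hye : A.A.act (A.A.act y e) e = A.A.act y e := by rw [A.A.act_mul, he']
    refine Subtype.ext (Prod.ext (p_ext A e (A.A.act y e) he' hye) ?_)
    exact (Quot.sound ⟨e, he', hye, rfl⟩).trans hfix

theorem phi_comm :
    ((adjUR S).toMonad : EtaleSet S ⥤ EtaleSet S).map (phi A)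
        ≫ ((Monad.comparison (adjUR S)).obj (quotUSet A)).a
      = A.a ≫ phi A := by
  apply EtaleSet.Hom.ext
  funext q
  obtain ⟨⟨e, y⟩, he, hy⟩ := q
  exact Subtype.ext (Prod.ext (p_ext A e y he hy).symm
    (Quot.sound ⟨e, he, hy, rfl⟩).symm)

/-- The algebra `A` is isomorphic to the comparison applied to its quotient. -/
noncomputable def algIso :
    A ≅ (Monad.comparison (adjUR S)).obj (quotUSet A) :=
  Monad.Algebra.isoMk (CategoryTheory.Iso.mk (phi A) (psi A) (phi_psi_id A) (psi_phi_id A))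
    (phi_comm A)

end Algebras

instance : (Monad.comparison (adjUR S)).EssSurj :=
  ⟨fun A => ⟨quotUSet A, ⟨(algIso A).symm⟩⟩⟩

section FullFaithful

instance : (Monad.comparison (adjUR S)).Faithful where
  map_injective := by
    intro X X' g g' h
    have h2 := congrArg EtaleSet.Hom.toFun (congrArg Monad.Algebra.Hom.f h)
    apply RSet.Hom.ext
    funext x
    obtain ⟨y, s, hys⟩ := X.2 x
    have hx : X.1.act x (star s * s) = x := by
      rw [← hys, X.1.act_mul, ← mul_assoc, mul_star_mul]
    have := congrFun h2 ⟨(star s * s, x), star_mul_self_idem s, hx⟩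
    exact congrArg (fun t => t.1.2) this

/-- The second component of the underlying map of an algebra morphism out of a
comparison object. -/
def h2map {X X' : USet S}
    (h : (Monad.comparison (adjUR S)).obj X ⟶ (Monad.comparison (adjUR S)).obj X')
    (q : ((RFunctor S).obj X).carrier) : X'.1.carrier :=
  (h.f.toFun q).1.2

theorem h2map_step {X X' : USet S}
    (h : (Monad.comparison (adjUR S)).obj X ⟶ (Monad.comparison (adjUR S)).obj X')
    (e f : S) (x : X.1.carrier) (he : e * e = e) (hf : f * f = f)
    (hef : star e * f * e = f) (hxe : X.1.act x e = x) (hxf : X.1.act x f = x) :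
    h2map h ⟨(f, x), hf, hxf⟩ = h2map h ⟨(e, x), he, hxe⟩ := by
  have := congrFun (congrArg EtaleSet.Hom.toFun h.h)
    ⟨(e, ⟨(f, x), hf, hxf⟩), he, Subtype.ext (Prod.ext hef hxe)⟩
  exact congrArg (fun t => t.1.2) this

theorem h2map_indep {X X' : USet S}
    (h : (Monad.comparison (adjUR S)).obj X ⟶ (Monad.comparison (adjUR S)).obj X')
    (e f : S) (x : X.1.carrier) (he : e * e = e) (hf : f * f = f)
    (hxe : X.1.act x e = x) (hxf : X.1.act x f = x) :
    h2map h ⟨(e, x), he, hxe⟩ = h2map h ⟨(f, x), hf, hxf⟩ := by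
  have hd : (e * f) * (e * f) = e * f := mul_idem he hf
  have hxd : X.1.act x (e * f) = x := by rw [← X.1.act_mul, hxe, hxf]
  have hde : star e * (e * f) * e = e * f := by
    rw [idem_conj he hd, mul_assoc, idem_comm hf he, ← mul_assoc, he]
  have hdf : star f * (e * f) * f = e * f := by
    rw [idem_conj hf hd, mul_assoc, hf]
  rw [← h2map_step h e (e * f) x he hd hde hxe hxd,
    h2map_step h f (e * f) x hf hd hdf hxf hxd]

/-- A canonical idempotent fixing `x`, obtained from unitarity. -/
noncomputable def fixIdem (X : USet S) (x : X.1.carrier) : S :=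
  star (X.2 x).choose_spec.choose * (X.2 x).choose_spec.choose

theorem fixIdem_idem (X : USet S) (x : X.1.carrier) :
    fixIdem X x * fixIdem X x = fixIdem X x :=
  star_mul_self_idem _

theorem act_fix_of_eq {X : USet S} {x : X.1.carrier} {y : X.1.carrier} {s : S}
    (hys : X.1.act y s = x) : X.1.act x (star s * s) = x := by
  subst hys
  rw [X.1.act_mul, ← mul_assoc, mul_star_mul]

theorem fixIdem_fix (X : USet S) (x : X.1.carrier) :
    X.1.act x (fixIdem X x) = x :=
  act_fix_of_eq (X.2 x).choose_spec.choose_spec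

/-- The underlying map of the preimage under the comparison functor. -/
noncomputable def gmap {X X' : USet S}
    (h : (Monad.comparison (adjUR S)).obj X ⟶ (Monad.comparison (adjUR S)).obj X')
    (x : X.1.carrier) : X'.1.carrier :=
  h2map h ⟨(fixIdem X x, x), fixIdem_idem X x, fixIdem_fix X x⟩

theorem gmap_act {X X' : USet S}
    (h : (Monad.comparison (adjUR S)).obj X ⟶ (Monad.comparison (adjUR S)).obj X')
    (x : X.1.carrier) (s : S) :
    gmap h (X.1.act x s) = X'.1.act (gmap h x) s := by
  have he := fixIdem_idem X x
  have hxe := fixIdem_fix X x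
  have hcfix : X.1.act (X.1.act x s) (star s * fixIdem X x * s) = X.1.act x s := by
    rw [X.1.act_mul, conj_absorb he s, ← X.1.act_mul, hxe]
  show h2map h ⟨(fixIdem X (X.1.act x s), X.1.act x s), fixIdem_idem X _, fixIdem_fix X _⟩
    = X'.1.act (h2map h ⟨(fixIdem X x, x), he, hxe⟩) s
  rw [h2map_indep h (fixIdem X (X.1.act x s)) (star s * fixIdem X x * s)
    (X.1.act x s) (fixIdem_idem X _) (conj_idem he s) (fixIdem_fix X _) hcfix]
  exact congrArg (fun t => t.1.2) (h.f.map_act ⟨(fixIdem X x, x), he, hxe⟩ s)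

instance : (Monad.comparison (adjUR S)).Full where
  map_surjective := by
    intro X X' h
    refine ⟨⟨gmap h, gmap_act h⟩, ?_⟩
    · -- K.map g = h
      apply Monad.Algebra.Hom.ext
      apply EtaleSet.Hom.ext
      funext q
      obtain ⟨⟨e, x⟩, he, hxe⟩ := q
      have he' : e * e = e := he
      have hxe' : X.1.act x e = x := hxe
      refine Subtype.ext (Prod.ext (h.f.map_p ⟨(e, x), he, hxe⟩).symm ?_)
      exact h2map_indep h (fixIdem X x) e x (fixIdem_idem X x) he' (fixIdem_fix X x) hxe'

end FullFaithful

end MonadicAux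

/-- The functor `R : S-Set → Étale(S)` is monadic; consequently the category of
unitary right `S`-sets is equivalent to the Eilenberg–Moore category of algebras
for the induced monad `R ∘ U` on the category of étale right `S`-sets. -/
theorem rFunctor_monadic
    (S : Type u) [InverseSemigroup S] :
    Nonempty (MonadicRightAdjoint (RFunctor S)) ∧
      ∃ adj : UFunctor S ⊣ RFunctor S,
        Nonempty (USet S ≌ (Adjunction.toMonad adj).Algebra) := by
  have heqv : (Monad.comparison (adjUR S)).IsEquivalence :=
    { faithful := inferInstance, full := inferInstance, essSurj := inferInstance }
  exact ⟨⟨⟨UFunctor S, adjUR S, heqv⟩⟩,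
    ⟨adjUR S, ⟨@Functor.asEquivalence _ _ _ _ (Monad.comparison (adjUR S)) heqv⟩⟩⟩
end
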